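/- arXiv:2410.14999 — 5 statements merged into one kernel-verified Lean document; each statement's English description precedes it below -/
import Mathlib

section
/- Let d ≥ 2 and let f : ℝ^d → ℝ be C^∞ with compact support. Then for each fixed unit vector ω ∈ S, the function p ↦ [Rf](ω,p) is C^∞ on ℝ, and its derivative is given by (d/dp)[Rf](ω,p) = [Rg](ω,p), where g(x) := ⟪∇f(x), ω⟫ is the directional derivative of f in the direction ω. -/
open MeasureTheory Metric Set

open scoped ENNReal NNReal

set_option maxHeartbeats 1000000

lemma hausdorff_finiteOnCompacts (n : ℕ) :
    IsFiniteMeasureOnCompacts (μH[(n : ℝ)] : Measure (EuclideanSpace ℝ (Fin n))) := by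
  constructor
  intro K hK
  set e := WithLp.equiv 2 (Fin n → ℝ) with he
  have hlip : LipschitzWith ((Fintype.card (Fin n) : ℝ≥0) ^ (1 / (2:ℝ≥0∞)).toReal) e.symm := by
    apply LipschitzWith.of_dist_le_mul
    intro a b
    have h := (PiLp.antilipschitzWith_ofLp 2 (fun _ : Fin n => ℝ)).le_mul_dist
      (e.symm a) (e.symm b)
    simpa [he] using h
  have himg : K = e.symm '' (e '' K) := by
    rw [← Set.image_comp]; simp
  have hcomp : IsCompact (e '' K) := hK.image (PiLp.lipschitzWith_ofLp 2 _).continuous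
  have hpi : (μH[(n:ℝ)] : Measure (Fin n → ℝ)) = volume := by
    simpa using hausdorffMeasure_pi_real (ι := Fin n)
  calc μH[(n:ℝ)] K = μH[(n:ℝ)] (e.symm '' (e '' K)) := by rw [← himg]
    _ ≤ (((Fintype.card (Fin n) : ℝ≥0) ^ (1 / (2:ℝ≥0∞)).toReal : ℝ≥0) : ℝ≥0∞) ^ (n:ℝ)
        * μH[(n:ℝ)] (e '' K) := hlip.hausdorffMeasure_image_le (by positivity) _
    _ < ⊤ := by
        rw [hpi]
        exact ENNReal.mul_lt_top
          (ENNReal.rpow_lt_top_of_nonneg (by positivity) ENNReal.coe_ne_top)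
          hcomp.measure_lt_top

lemma map_hausdorff_isometry {X Y : Type*} [MetricSpace X] [MeasurableSpace X] [BorelSpace X]
    [MetricSpace Y] [MeasurableSpace Y] [BorelSpace Y] {e : X → Y} (he : Isometry e)
    {r : ℝ} (hr : 0 ≤ r) (hrange : MeasurableSet (Set.range e)) :
    (μH[r] : Measure X).map e = (μH[r] : Measure Y).restrict (Set.range e) := by
  ext s hs
  rw [Measure.map_apply he.continuous.measurable hs, Measure.restrict_apply hs,
    ← Set.image_preimage_eq_inter_range, he.hausdorffMeasure_image (Or.inl hr)]

/-- The Radon transform of `f : ℝ^d → ℝ`: integral of `f` over the hyperplane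
`{x : ⟪x,ω⟫ = p}` with respect to the `(d-1)`-dimensional Hausdorff measure. -/
noncomputable def radonTransform {d : ℕ} (f : EuclideanSpace ℝ (Fin d) → ℝ)
    (ω : EuclideanSpace ℝ (Fin d)) (p : ℝ) : ℝ :=
  ∫ x in {x : EuclideanSpace ℝ (Fin d) | (inner ℝ x ω : ℝ) = p}, f x ∂(μH[(d : ℝ) - 1])

/-- For smooth compactly supported `f`, the Radon projection `p ↦ [Rf](ω,p)` is smooth
and its derivative is the Radon projection of the directional derivative `⟪∇f, ω⟫`. -/
theorem radon_smooth_deriv {d : ℕ} (hd : 2 ≤ d)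
    (f : EuclideanSpace ℝ (Fin d) → ℝ) (hf : ContDiff ℝ (⊤ : ℕ∞) f)
    (hsupp : HasCompactSupport f) :
    ∀ ω ∈ sphere (0 : EuclideanSpace ℝ (Fin d)) 1,
      ContDiff ℝ (⊤ : ℕ∞) (fun p => radonTransform f ω p) ∧
      ∀ p : ℝ, deriv (fun q => radonTransform f ω q) p =
        radonTransform (fun x => (inner ℝ (gradient f x) ω : ℝ)) ω p := by
  intro ω hω
  have hω1 : ‖ω‖ = 1 := by simpa [mem_sphere_zero_iff_norm] using hω
  have hω0 : ω ≠ 0 := by intro h; rw [h] at hω1; simp at hω1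
  haveI : Fact (Module.finrank ℝ (EuclideanSpace ℝ (Fin d)) = (d - 1) + 1) :=
    ⟨by rw [finrank_euclideanSpace_fin]; omega⟩
  have hdim : Module.finrank ℝ ((ℝ ∙ ω)ᗮ : Submodule ℝ (EuclideanSpace ℝ (Fin d))) = d - 1 :=
    Submodule.finrank_orthogonal_span_singleton hω0
  set V : Submodule ℝ (EuclideanSpace ℝ (Fin d)) := (ℝ ∙ ω)ᗮ with hV
  have hexp : ((Module.finrank ℝ V : ℕ) : ℝ) = (d : ℝ) - 1 := by
    rw [hdim, Nat.cast_sub (by omega)]; simp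
  set E' := EuclideanSpace ℝ (Fin (Module.finrank ℝ V)) with hE'
  let b := stdOrthonormalBasis ℝ V
  let L : E' →ₗᵢ[ℝ] EuclideanSpace ℝ (Fin d) := V.subtypeₗᵢ.comp b.repr.symm.toLinearIsometry
  have hLmem : ∀ y, L y ∈ V := fun y => (b.repr.symm y).2
  have hLsurj : ∀ x, x ∈ V → ∃ y, L y = x := fun x hx => ⟨b.repr ⟨x, hx⟩, by simp [L]⟩
  have hiso : ∀ p : ℝ, Isometry (fun y : E' => p • ω + L y) := by
    intro p
    apply Isometry.of_dist_eq
    intro a c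
    rw [dist_add_left]
    exact L.dist_map a c
  have hrange : ∀ p : ℝ, Set.range (fun y : E' => p • ω + L y)
      = {x : EuclideanSpace ℝ (Fin d) | (inner ℝ x ω : ℝ) = p} := by
    intro p
    ext x
    simp only [Set.mem_range, Set.mem_setOf_eq]
    constructor
    · rintro ⟨y, rfl⟩
      have h0 : (inner ℝ (L y) ω : ℝ) = 0 := by
        rw [real_inner_comm]
        exact Submodule.mem_orthogonal_singleton_iff_inner_right.mp (hLmem y)
      rw [inner_add_left, real_inner_smul_left, real_inner_self_eq_norm_mul_norm, hω1, h0]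
      ring
    · intro hx
      have hmem : x - p • ω ∈ V := by
        apply Submodule.mem_orthogonal_singleton_iff_inner_right.mpr
        rw [inner_sub_right, real_inner_smul_right, real_inner_self_eq_norm_mul_norm, hω1,
          real_inner_comm, hx]
        ring
      obtain ⟨y, hy⟩ := hLsurj (x - p • ω) hmem
      exact ⟨y, by rw [hy, add_sub_cancel]⟩
  have hmeas : ∀ p : ℝ, MeasurableSet {x : EuclideanSpace ℝ (Fin d) | (inner ℝ x ω : ℝ) = p} :=
    fun p => (isClosed_eq (continuous_id.inner continuous_const) continuous_const).measurableSet
  have hr0 : (0:ℝ) ≤ (d : ℝ) - 1 := by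
    have : (2:ℝ) ≤ d := by exact_mod_cast hd
    linarith
  haveI hfin : IsFiniteMeasureOnCompacts (μH[(d:ℝ)-1] : Measure E') := by
    rw [← hexp]; exact hausdorff_finiteOnCompacts _
  have htrans : ∀ h : EuclideanSpace ℝ (Fin d) → ℝ, Continuous h → ∀ p : ℝ,
      radonTransform h ω p = ∫ y, h (p • ω + L y) ∂(μH[(d:ℝ)-1] : Measure E') := by
    intro h hc p
    have hms : MeasurableSet (Set.range (fun y : E' => p • ω + L y)) := by
      rw [hrange p]; exact hmeas p
    simp only [radonTransform]
    rw [← hrange p, ← map_hausdorff_isometry (hiso p) hr0 hms,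
      integral_map ((hiso p).continuous.aemeasurable) hc.aestronglyMeasurable]
  have hginner : ∀ (g : EuclideanSpace ℝ (Fin d) → ℝ) (x),
      (inner ℝ (gradient g x) ω : ℝ) = fderiv ℝ g x ω := fun g x => by
    simp [gradient, InnerProductSpace.toDual_symm_apply]
  have key : ∀ g : EuclideanSpace ℝ (Fin d) → ℝ, ContDiff ℝ (⊤ : ℕ∞) g → HasCompactSupport g →
      ∀ p : ℝ, HasDerivAt (fun q => radonTransform g ω q)
        (radonTransform (fun x => (inner ℝ (gradient g x) ω : ℝ)) ω p) p := by
    intro g hg hgs p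
    have hgc : Continuous g := hg.continuous
    have hgd : Differentiable ℝ g := hg.differentiable (by simp)
    have hfderiv_cont : Continuous fun x => fderiv ℝ g x ω :=
      (hg.continuous_fderiv (by simp)).clm_apply continuous_const
    have hzero : ∀ x, x ∉ tsupport g → fderiv ℝ g x = 0 := by
      intro x hx
      have h0 : g =ᶠ[nhds x] 0 := notMem_tsupport_iff_eventuallyEq.1 hx
      rw [h0.fderiv_eq]
      exact fderiv_const_apply 0
    obtain ⟨R, hR⟩ := hgs.isBounded.subset_closedBall 0
    obtain ⟨C, hC⟩ := (hgs.fderiv (𝕜 := ℝ)).exists_bound_of_continuous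
      (hg.continuous_fderiv (by simp))
    have hnorm : ∀ (q : ℝ) (y : E'), ‖y‖ ≤ ‖q • ω + L y‖ + |q| := by
      intro q y
      have h1 : ‖y‖ = ‖L y‖ := (L.norm_map y).symm
      have h2 : ‖L y‖ = ‖(q • ω + L y) - q • ω‖ := by rw [add_sub_cancel_left]
      have h3 : ‖(q • ω + L y) - q • ω‖ ≤ ‖q • ω + L y‖ + ‖q • ω‖ := norm_sub_le _ _
      have h4 : ‖q • ω‖ = |q| := by rw [norm_smul, hω1, Real.norm_eq_abs, mul_one]
      rw [h1, h2]; rw [h4] at h3; exact h3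
    have hout : ∀ q : ℝ, q ∈ ball p 1 → ∀ y : E',
        y ∉ closedBall (0 : E') (R + |p| + 1) → (q • ω + L y) ∉ tsupport g := by
      intro q hq y hy hmem
      apply hy
      have h1 : ‖q • ω + L y‖ ≤ R := by
        have := hR hmem
        rwa [mem_closedBall_zero_iff] at this
      have h2 : |q| ≤ |p| + 1 := by
        have : |q - p| < 1 := by rwa [mem_ball, Real.dist_eq] at hq
        have := abs_sub_abs_le_abs_sub q p
        linarith
      have := hnorm q y
      rw [mem_closedBall_zero_iff]
      linarith
    set μ : Measure E' := μH[(d:ℝ)-1] with hμ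
    have hF_meas : ∀ᶠ q in nhds p, AEStronglyMeasurable (fun y : E' => g (q • ω + L y)) μ :=
      Filter.Eventually.of_forall fun q =>
        (hgc.comp (continuous_const.add L.continuous)).aestronglyMeasurable
    have hF_int : Integrable (fun y : E' => g (p • ω + L y)) μ := by
      have hcont : Continuous fun y : E' => g (p • ω + L y) :=
        hgc.comp (continuous_const.add L.continuous)
      apply hcont.integrable_of_hasCompactSupport
      apply HasCompactSupport.intro (isCompact_closedBall (0 : E') (R + |p|))
      intro y hy
      have hns : (p • ω + L y) ∉ tsupport g := by
        intro hmem
        apply hy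
        have h1 : ‖p • ω + L y‖ ≤ R := by
          have := hR hmem
          rwa [mem_closedBall_zero_iff] at this
        have := hnorm p y
        rw [mem_closedBall_zero_iff]
        linarith
      exact image_eq_zero_of_notMem_tsupport hns
    have hF'_meas : AEStronglyMeasurable (fun y : E' => fderiv ℝ g (p • ω + L y) ω) μ :=
      (hfderiv_cont.comp (continuous_const.add L.continuous)).aestronglyMeasurable
    have h_bound : ∀ᵐ y ∂μ, ∀ q ∈ ball p 1,
        ‖fderiv ℝ g (q • ω + L y) ω‖ ≤
          (closedBall (0 : E') (R + |p| + 1)).indicator (fun _ => C) y := by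
      apply Filter.Eventually.of_forall
      intro y q hq
      by_cases hy : y ∈ closedBall (0 : E') (R + |p| + 1)
      · rw [indicator_of_mem hy]
        calc ‖fderiv ℝ g (q • ω + L y) ω‖ ≤ ‖fderiv ℝ g (q • ω + L y)‖ * ‖ω‖ :=
              (fderiv ℝ g (q • ω + L y)).le_opNorm ω
          _ ≤ C := by rw [hω1, mul_one]; exact hC _
      · rw [indicator_of_notMem hy, hzero _ (hout q hq y hy)]
        simp
    have bound_int : Integrable ((closedBall (0 : E') (R + |p| + 1)).indicator (fun _ => C)) μ := by
      rw [integrable_indicator_iff measurableSet_closedBall]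
      exact integrableOn_const (isCompact_closedBall _ _).measure_lt_top.ne enorm_ne_top
    have h_diff : ∀ᵐ y ∂μ, ∀ q ∈ ball p 1,
        HasDerivAt (fun q : ℝ => g (q • ω + L y)) (fderiv ℝ g (q • ω + L y) ω) q := by
      apply Filter.Eventually.of_forall
      intro y q _
      have h1 : HasDerivAt (fun q : ℝ => q • ω + L y) ω q := by
        simpa using ((hasDerivAt_id q).smul_const ω).add_const (L y)
      exact (hgd (q • ω + L y)).hasFDerivAt.comp_hasDerivAt q h1
    obtain ⟨-, hder⟩ := hasDerivAt_integral_of_dominated_loc_of_deriv_le (ball_mem_nhds p one_pos)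
      hF_meas hF_int hF'_meas h_bound bound_int h_diff
    have e1 : (fun q => radonTransform g ω q) = fun q => ∫ y, g (q • ω + L y) ∂μ :=
      funext fun q => htrans g hgc q
    have e2 : radonTransform (fun x => (inner ℝ (gradient g x) ω : ℝ)) ω p
        = ∫ y, fderiv ℝ g (p • ω + L y) ω ∂μ := by
      rw [show (fun x => (inner ℝ (gradient g x) ω : ℝ)) = fun x => fderiv ℝ g x ω from
        funext fun x => hginner g x]
      exact htrans _ hfderiv_cont p
    rw [e1, e2]
    exact hder
  have gprops : ∀ g : EuclideanSpace ℝ (Fin d) → ℝ, ContDiff ℝ (⊤ : ℕ∞) g →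
      HasCompactSupport g →
      ContDiff ℝ (⊤ : ℕ∞) (fun x => (inner ℝ (gradient g x) ω : ℝ)) ∧
      HasCompactSupport (fun x => (inner ℝ (gradient g x) ω : ℝ)) := by
    intro g hg hgs
    have heq : (fun x => (inner ℝ (gradient g x) ω : ℝ)) = fun x => fderiv ℝ g x ω :=
      funext fun x => hginner g x
    rw [heq]
    constructor
    · exact (hg.fderiv_right (by exact_mod_cast le_top)).clm_apply contDiff_const
    · apply HasCompactSupport.intro hgs
      intro x hx
      have h0 : g =ᶠ[nhds x] 0 := notMem_tsupport_iff_eventuallyEq.1 hx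
      have h1 : fderiv ℝ (0 : EuclideanSpace ℝ (Fin d) → ℝ) x = 0 := fderiv_const_apply 0
      rw [h0.fderiv_eq, h1]
      rfl
  have smooth_n : ∀ N : ℕ, ∀ g : EuclideanSpace ℝ (Fin d) → ℝ, ContDiff ℝ (⊤ : ℕ∞) g →
      HasCompactSupport g → ContDiff ℝ N (fun p => radonTransform g ω p) := by
    intro N
    induction N with
    | zero =>
      intro g hg hgs
      rw [show ((0 : ℕ) : WithTop ℕ∞) = 0 from rfl, contDiff_zero]
      exact continuous_iff_continuousAt.2 fun p => (key g hg hgs p).continuousAt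
    | succ N ih =>
      intro g hg hgs
      rw [show ((N + 1 : ℕ) : WithTop ℕ∞) = (N : WithTop ℕ∞) + 1 by push_cast; ring,
        contDiff_succ_iff_deriv]
      refine ⟨fun p => (key g hg hgs p).differentiableAt, by simp, ?_⟩
      have hde : deriv (fun q => radonTransform g ω q)
          = fun q => radonTransform (fun x => (inner ℝ (gradient g x) ω : ℝ)) ω q :=
        funext fun q => (key g hg hgs q).deriv
      rw [hde]
      exact ih _ (gprops g hg hgs).1 (gprops g hg hgs).2
  refine ⟨contDiff_infty.2 fun N => smooth_n N f hf hsupp, fun p => (key f hf hsupp p).deriv⟩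
end

section
/- Let d ≥ 2 and let u : ℝ × ℝ^d → ℝ be C^∞ and satisfy the free-space wave equation ∂²u/∂t²(t,x) = Δu(t,x) for all (t,x). Assume there is R > 0 such that u(t,x) = 0 whenever |x| ≥ R + |t|. Then for every fixed unit vector ω ∈ S, the function w(t,p) := [R u(t,·)](ω,p) (the Radon projection of the time-t slice of u) satisfies the one-dimensional wave equation ∂²w/∂t²(t,p) = ∂²w/∂p²(t,p) for all (t,p) ∈ ℝ × ℝ. -/
open MeasureTheory Metric Set

/-- The Euclidean Laplacian: sum of the second derivatives along the coordinate
directions. -/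
noncomputable def laplacian {d : ℕ} (f : EuclideanSpace ℝ (Fin d) → ℝ)
    (x : EuclideanSpace ℝ (Fin d)) : ℝ :=
  ∑ i : Fin d, iteratedDeriv 2 (fun s : ℝ => f (x + s • EuclideanSpace.single i (1 : ℝ))) 0

open Module NNReal

namespace RadonAux

variable {α : Type*} [NormedAddCommGroup α] [NormedSpace ℝ α]

-- derivative of first-variable slice
lemma hasDerivAt_slice (G : ℝ × α → ℝ) (hG : ContDiff ℝ (⊤:ℕ∞) G) (t : ℝ) (x : α) :
    HasDerivAt (fun s => G (s, x)) (fderiv ℝ G (t, x) (1, 0)) t := by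
  have h1 : HasDerivAt (fun s : ℝ => (s, x)) ((1:ℝ), (0:α)) t := by
    simpa using (hasDerivAt_id t).prodMk (hasDerivAt_const t x)
  exact ((hG.differentiable (by norm_num) (t, x)).hasFDerivAt).comp_hasDerivAt t h1

lemma contDiff_pderiv (G : ℝ × α → ℝ) (hG : ContDiff ℝ (⊤:ℕ∞) G) :
    ContDiff ℝ (⊤:ℕ∞) (fun z => fderiv ℝ G z (1, 0)) :=
  (hG.fderiv_right (by exact_mod_cast le_top)).clm_apply contDiff_const



variable {m : ℕ}

local notation "E" m => EuclideanSpace ℝ (Fin m)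


variable {m : ℕ}




lemma integrable_of_zero_off_ball (h : (E m) → ℝ) (hc : Continuous h) (M : ℝ)
    (hM : ∀ y, M < ‖y‖ → h y = 0) : Integrable h := by
  apply hc.integrable_of_hasCompactSupport
  apply HasCompactSupport.intro (isCompact_closedBall (0 : E m) M)
  intro y hy
  exact hM y (by simpa [dist_eq_norm] using hy)

-- support persistence for the first-variable partial derivative
lemma pderiv_supp (F : ℝ × (E m) → ℝ) (R : ℝ)
    (hs : ∀ s y, R + |s| < ‖y‖ → F (s, y) = 0) :
    ∀ s y, R + |s| < ‖y‖ → fderiv ℝ F (s, y) (1, 0) = 0 := by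
  intro s y hsy
  have hopen : IsOpen {z : ℝ × (E m) | R + |z.1| < ‖z.2‖} := by
    apply isOpen_lt
    · exact (continuous_const.add (continuous_abs.comp continuous_fst))
    · exact continuous_norm.comp continuous_snd
  have hev : F =ᶠ[nhds (s, y)] (fun _ => 0) := by
    filter_upwards [hopen.mem_nhds hsy] with z hz
    exact hs z.1 z.2 hz
  rw [hev.fderiv_eq, fderiv_fun_const]
  rfl

-- differentiation under the integral sign
lemma hasDerivAt_integral_param (F : ℝ × (E m) → ℝ) (hF : ContDiff ℝ (⊤:ℕ∞) F)
    (R : ℝ) (hR : 0 < R) (hs : ∀ s y, R + |s| < ‖y‖ → F (s, y) = 0) (t : ℝ) :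
    HasDerivAt (fun s => ∫ y, F (s, y)) (∫ y, fderiv ℝ F (t, y) (1, 0)) t := by
  set F' : ℝ → (E m) → ℝ := fun s y => fderiv ℝ F (s, y) (1, 0) with hF'
  have hF'c : Continuous fun z : ℝ × (E m) => fderiv ℝ F z (1, 0) :=
    (contDiff_pderiv F hF).continuous
  -- compact set and bound
  obtain ⟨C, hC⟩ : ∃ C, ∀ z ∈ (Icc (t-1) (t+1) ×ˢ closedBall (0 : E m) (R + |t| + 1)),
      ‖fderiv ℝ F z (1, 0)‖ ≤ C := by
    rcases ((isCompact_Icc.prod (isCompact_closedBall _ _)).exists_bound_of_continuousOn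
      hF'c.continuousOn) with ⟨C, hC⟩
    exact ⟨C, hC⟩
  set bound : (E m) → ℝ := (closedBall (0 : E m) (R + |t| + 1)).indicator (fun _ => C)
  have key := hasDerivAt_integral_of_dominated_loc_of_deriv_le (μ := (volume : Measure (E m)))
    (F := fun s y => F (s, y)) (F' := F') (x₀ := t) (bound := bound) (s := Metric.ball t 1) (Metric.ball_mem_nhds t one_pos)
    ?_ ?_ ?_ ?_ ?_ ?_
  · exact key.2
  · filter_upwards with s
    exact (hF.continuous.comp (continuous_const.prodMk continuous_id)).aestronglyMeasurable
  · apply integrable_of_zero_off_ball _ (hF.continuous.comp (by fun_prop)) (R + |t|)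
    intro y hy
    exact hs t y (by linarith)
  · exact (hF'c.comp (continuous_const.prodMk continuous_id)).aestronglyMeasurable
  · filter_upwards with y
    intro s hsb
    by_cases hy : y ∈ closedBall (0 : E m) (R + |t| + 1)
    · have : (s, y) ∈ (Icc (t-1) (t+1) ×ˢ closedBall (0 : E m) (R + |t| + 1)) := by
        constructor
        · have := abs_lt.1 (mem_ball_iff_norm.1 hsb)
          constructor <;> simp only [mem_Icc] <;> linarith [this.1, this.2]
        · exact hy
      have := hC _ this
      simpa [bound, Set.indicator_of_mem hy] using this
    · have hy' : R + |t| + 1 < ‖y‖ := by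
        simpa [dist_eq_norm] using hy
      have hz : F' s y = 0 := by
        apply pderiv_supp F R hs
        have h1 : |s - t| < 1 := mem_ball_iff_norm.1 hsb
        have h2 : |s| ≤ |s - t| + |t| := by simpa using abs_add_le (s-t) t
        linarith
      simp [bound, Set.indicator_of_notMem hy, hz]
  · apply (integrable_indicator_iff measurableSet_closedBall).2
    exact integrableOn_const measure_closedBall_lt_top.ne
  · filter_upwards with y
    intro s _
    exact hasDerivAt_slice F hF s y



lemma hasDerivAt_line {F : Type*} [NormedAddCommGroup F] [NormedSpace ℝ F]
    (f : F → ℝ) (hf : Differentiable ℝ f) (x v : F) (s : ℝ) :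
    HasDerivAt (fun s : ℝ => f (x + s • v)) (fderiv ℝ f (x + s • v) v) s := by
  have h1 : HasDerivAt (fun s : ℝ => x + s • v) v s := by
    simpa using (HasDerivAt.smul_const (hasDerivAt_id s) v).const_add x
  exact ((hf (x + s • v)).hasFDerivAt).comp_hasDerivAt s h1


lemma contDiff_dirderiv (f : (E m) → ℝ) (hf : ContDiff ℝ (⊤:ℕ∞) f) (v : E m) :
    ContDiff ℝ (⊤:ℕ∞) (fun y => fderiv ℝ f y v) :=
  (hf.fderiv_right (by exact_mod_cast le_top)).clm_apply contDiff_const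

lemma dirderiv_supp (f : (E m) → ℝ) (M : ℝ) (hs : ∀ y, M < ‖y‖ → f y = 0)
    (v : E m) : ∀ y, M < ‖y‖ → fderiv ℝ f y v = 0 := by
  intro y hy
  have hopen : IsOpen {z : E m | M < ‖z‖} := isOpen_lt continuous_const continuous_norm
  have hev : f =ᶠ[nhds y] (fun _ => 0) := by
    filter_upwards [hopen.mem_nhds hy] with z hz using hs z hz
  rw [hev.fderiv_eq, fderiv_fun_const]; rfl

lemma iteratedDeriv_two (f : ℝ → ℝ) (x : ℝ) :
    iteratedDeriv 2 f x = deriv (deriv f) x := by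
  rw [show (2:ℕ) = 1 + 1 from rfl, iteratedDeriv_succ, iteratedDeriv_one]

lemma iteratedDeriv_two_line (f : (E m) → ℝ) (hf : ContDiff ℝ (⊤:ℕ∞) f) (x v : E m) :
    iteratedDeriv 2 (fun s : ℝ => f (x + s • v)) 0
      = fderiv ℝ (fun z => fderiv ℝ f z v) x v := by
  have hdiff : Differentiable ℝ f := hf.differentiable (by norm_num)
  have h1 : deriv (fun s : ℝ => f (x + s • v)) = fun s => fderiv ℝ f (x + s • v) v :=
    funext fun s => (hasDerivAt_line f hdiff x v s).deriv
  rw [iteratedDeriv_two, h1]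
  have h2 := (hasDerivAt_line (fun z => fderiv ℝ f z v)
    ((contDiff_dirderiv f hf v).differentiable (by norm_num)) x v 0).deriv
  simpa using h2

lemma integral_deriv_real (q : ℝ → ℝ) (hq : ContDiff ℝ (⊤:ℕ∞) q) (hsupp : HasCompactSupport q) :
    ∫ s : ℝ, deriv q s = 0 := by
  have h1 : ContDiff ℝ 1 q := hq.of_le (by exact_mod_cast le_top)
  have hint : Integrable (deriv q) :=
    (h1.continuous_deriv le_rfl).integrable_of_hasCompactSupport
      hsupp.deriv
  rw [← intervalIntegral.integral_Iic_add_Ioi (b := (0:ℝ)) hint.integrableOn hint.integrableOn,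
    HasCompactSupport.integral_Iic_deriv_eq h1 hsupp 0,
    HasCompactSupport.integral_Ioi_deriv_eq h1 hsupp 0]
  ring

lemma integral_dirderiv_zero (g : (E m) → ℝ) (hg : ContDiff ℝ (⊤:ℕ∞) g) (M : ℝ)
    (hs : ∀ y, M < ‖y‖ → g y = 0) (i : Fin m) :
    ∫ y : E m, fderiv ℝ g y (EuclideanSpace.single i (1:ℝ)) = 0 := by
  obtain ⟨k, rfl⟩ : ∃ k, m = k + 1 := ⟨m - 1, by have := i.pos; omega⟩
  set e : E (k+1) := EuclideanSpace.single i (1:ℝ) with he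
  have hnorm_e : ‖e‖ = 1 := by simp [he, EuclideanSpace.norm_single]
  set h : (E (k+1)) → ℝ := fun y => fderiv ℝ g y e with hh
  have hcont : Continuous h := (contDiff_dirderiv g hg e).continuous
  have hsupp : ∀ y, M < ‖y‖ → h y = 0 := fun y hy => dirderiv_supp g M hs e y hy
  have hint : Integrable h := integrable_of_zero_off_ball h hcont M hsupp
  set Ψ : (ℝ × (Fin k → ℝ)) ≃ᵐ (E (k+1)) :=
    (MeasurableEquiv.piFinSuccAbove (fun _ : Fin (k+1) => ℝ) i).symm.trans
      (MeasurableEquiv.toLp 2 (Fin (k+1) → ℝ)) with hΨdef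
  have hΨ : MeasurePreserving Ψ volume volume := by
    exact ((EuclideanSpace.volume_preserving_symm_measurableEquiv_toLp (Fin (k+1))).symm).comp
      ((volume_preserving_piFinSuccAbove (fun _ : Fin (k+1) => ℝ) i).symm)
  have h1 : ∫ y : E (k+1), h y = ∫ z : ℝ × (Fin k → ℝ), h (Ψ z) :=
    (hΨ.integral_comp Ψ.measurableEmbedding h).symm
  have hintc : Integrable (fun z : ℝ × (Fin k → ℝ) => h (Ψ z)) :=
    (hΨ.integrable_comp_emb Ψ.measurableEmbedding).2 hint
  have hline : ∀ (z : Fin k → ℝ) (s : ℝ), Ψ (s, z) = Ψ (0, z) + s • e := by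
    intro z s
    apply PiLp.ext
    intro j
    have hco : ∀ a : ℝ, (Ψ (a, z)) j = Fin.insertNth (α := fun _ => ℝ) i a z j := by
      intro a
      simp [hΨdef, MeasurableEquiv.piFinSuccAbove, MeasurableEquiv.coe_toLp]; rfl
    have hadd : (Ψ ((0:ℝ), z) + s • e) j
        = (Ψ ((0:ℝ), z)) j + s * (if j = i then 1 else 0) := by
      simp [he, EuclideanSpace.single_apply]
    rw [hadd, hco, hco]
    rcases eq_or_ne j i with rfl | hne
    · simp
    · obtain ⟨j₀, rfl⟩ := Fin.exists_succAbove_eq hne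
      simp [hne]
  have hinner : ∀ z : Fin k → ℝ, ∫ s : ℝ, h (Ψ (s, z)) = 0 := by
    intro z
    set x₀ : E (k+1) := Ψ (0, z) with hx₀
    set q : ℝ → ℝ := fun s => g (x₀ + s • e) with hq
    have hqc : ContDiff ℝ (⊤:ℕ∞) q :=
      hg.comp (contDiff_const.add (contDiff_id.smul contDiff_const))
    have hqsupp : HasCompactSupport q := by
      apply HasCompactSupport.intro (isCompact_closedBall (0:ℝ) (M + ‖x₀‖))
      intro s hsb
      have h2 : M + ‖x₀‖ < |s| := by simpa [Real.dist_eq] using hsb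
      apply hs
      have h3 : ‖(x₀ + s • e) - x₀‖ ≤ ‖x₀ + s • e‖ + ‖x₀‖ := norm_sub_le _ _
      have h4 : ‖(x₀ + s • e) - x₀‖ = |s| := by
        simp [norm_smul, hnorm_e]
      linarith
    have hderiv : ∀ s : ℝ, h (Ψ (s, z)) = deriv q s := by
      intro s
      rw [hline z s, ← hx₀]
      exact (hasDerivAt_line g (hg.differentiable (by norm_num)) x₀ e s).deriv.symm
    calc ∫ s : ℝ, h (Ψ (s, z)) = ∫ s : ℝ, deriv q s := by simp only [hderiv]
    _ = 0 := integral_deriv_real q hqc hqsupp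
  have h2 : ∫ z : ℝ × (Fin k → ℝ), h (Ψ z) = 0 := by
    rw [Measure.volume_eq_prod, integral_prod_symm _ (by rwa [← Measure.volume_eq_prod])]
    simp only [hinner, integral_zero]
  exact h1.trans h2


lemma contDiff_dirderiv' (f : (E m) → ℝ) (hf : ContDiff ℝ (⊤:ℕ∞) f) (v : E m) :
    ContDiff ℝ (⊤:ℕ∞) (fun y => fderiv ℝ f y v) :=
  (hf.fderiv_right (by exact_mod_cast le_top)).clm_apply contDiff_const

lemma iteratedDeriv_two' (f : ℝ → ℝ) (x : ℝ) :
    iteratedDeriv 2 f x = deriv (deriv f) x := by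
  rw [show (2:ℕ) = 1 + 1 from rfl, iteratedDeriv_succ, iteratedDeriv_one]

-- second directional derivative via the iterated fderiv bilinear map
lemma iteratedDeriv_two_line' (f : (E m) → ℝ) (hf : ContDiff ℝ (⊤:ℕ∞) f) (x v : E m) :
    iteratedDeriv 2 (fun s : ℝ => f (x + s • v)) 0
      = fderiv ℝ (fderiv ℝ f) x v v := by
  have hdiff : Differentiable ℝ f := hf.differentiable (by norm_num)
  have h1 : deriv (fun s : ℝ => f (x + s • v)) = fun s => fderiv ℝ f (x + s • v) v :=
    funext fun s => (hasDerivAt_line f hdiff x v s).deriv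
  rw [iteratedDeriv_two', h1]
  have h2 := (hasDerivAt_line (fun z => fderiv ℝ f z v)
    ((contDiff_dirderiv' f hf v).differentiable (by norm_num)) x v 0).deriv
  simp only [zero_smul, add_zero] at h2
  rw [h2]
  -- now : fderiv ℝ (fun z => fderiv ℝ f z v) x v = fderiv ℝ (fderiv ℝ f) x v v
  have hc2 : ContDiff ℝ (⊤:ℕ∞) (fderiv ℝ f) := hf.fderiv_right (by exact_mod_cast le_top)
  have hdf : DifferentiableAt ℝ (fderiv ℝ f) x := (hc2.differentiable (by norm_num)) x
  rw [fderiv_clm_apply hdf (differentiableAt_const v)]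
  simp

-- basis invariance of the trace of a continuous bilinear map
lemma sum_bilin_eq {n : ℕ} (Φ : (E n) →L[ℝ] (E n) →L[ℝ] ℝ)
    (b : OrthonormalBasis (Fin n) ℝ (E n)) (c : OrthonormalBasis (Fin n) ℝ (E n)) :
    ∑ i : Fin n, Φ (b i) (b i) = ∑ i : Fin n, Φ (c i) (c i) := by
  have expand : ∀ v : E n, v = ∑ k, (inner ℝ (c k) v : ℝ) • c k := by
    intro v
    have := c.sum_repr' v
    simpa using this.symm
  have key : ∀ v : E n, Φ v v = ∑ k, ∑ l, (inner ℝ (c k) v : ℝ) * (inner ℝ (c l) v : ℝ) * Φ (c k) (c l) := by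
    intro v
    have e3 : ∀ w, Φ v w = ∑ k, (inner ℝ (c k) v : ℝ) * Φ (c k) w := by
      intro w
      conv_lhs => rw [expand v]
      simp [map_sum, _root_.map_smul, ContinuousLinearMap.sum_apply,
        ContinuousLinearMap.smul_apply, smul_eq_mul]
    rw [e3 v]
    refine Finset.sum_congr rfl fun k _ => ?_
    have e4 : Φ (c k) v = ∑ l, (inner ℝ (c l) v : ℝ) * Φ (c k) (c l) := by
      conv_lhs => rw [expand v]
      simp [map_sum, _root_.map_smul, smul_eq_mul]
    rw [e4, Finset.mul_sum]
    exact Finset.sum_congr rfl fun l _ => by ring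
  calc ∑ i, Φ (b i) (b i)
      = ∑ i, ∑ k, ∑ l, (inner ℝ (c k) (b i) : ℝ) * (inner ℝ (c l) (b i) : ℝ) * Φ (c k) (c l) := by
        exact Finset.sum_congr rfl fun i _ => key (b i)
    _ = ∑ k, ∑ l, (∑ i, (inner ℝ (c k) (b i) : ℝ) * (inner ℝ (b i) (c l) : ℝ)) * Φ (c k) (c l) := by
        rw [Finset.sum_comm]
        refine Finset.sum_congr rfl fun k _ => ?_
        rw [Finset.sum_comm]
        refine Finset.sum_congr rfl fun l _ => ?_
        rw [Finset.sum_mul]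
        refine Finset.sum_congr rfl fun i _ => ?_
        rw [real_inner_comm (b i) (c l)]
    _ = ∑ k, ∑ l, (inner ℝ (c k) (c l) : ℝ) * Φ (c k) (c l) := by
        refine Finset.sum_congr rfl fun k _ => Finset.sum_congr rfl fun l _ => ?_
        rw [b.sum_inner_mul_inner]
    _ = ∑ k, Φ (c k) (c k) := by
        refine Finset.sum_congr rfl fun k _ => ?_
        rw [Finset.sum_eq_single k]
        · rw [real_inner_self_eq_norm_sq, c.orthonormal.1 k]; norm_num
        · intro l _ hl
          rw [c.orthonormal.2 (Ne.symm hl)]; ring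
        · intro hk; exact absurd (Finset.mem_univ k) hk

lemma laplacian_eq_sum_basis {n : ℕ} (f : (E n) → ℝ) (hf : ContDiff ℝ (⊤:ℕ∞) f)
    (b : OrthonormalBasis (Fin n) ℝ (E n)) (x : E n) :
    laplacian f x = ∑ i : Fin n, iteratedDeriv 2 (fun s : ℝ => f (x + s • b i)) 0 := by
  unfold laplacian
  have h1 : ∀ v : E n, iteratedDeriv 2 (fun s : ℝ => f (x + s • v)) 0
      = fderiv ℝ (fderiv ℝ f) x v v := fun v => iteratedDeriv_two_line' f hf x v
  simp only [h1]
  have := sum_bilin_eq (fderiv ℝ (fderiv ℝ f) x) (EuclideanSpace.basisFun (Fin n) ℝ) b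
  simpa [EuclideanSpace.basisFun_apply] using this

-- Hausdorff measure on Euclidean space is a constant multiple of volume
lemma hausdorff_eq_smul_volume (m : ℕ) :
    ∃ c : ℝ≥0, (μH[(m:ℝ)] : Measure (E m)) = c • (volume : Measure (E m)) := by
  have h1 : ((m:ℝ)) = ((finrank ℝ (E m) : ℕ) : ℝ) := by
    rw [finrank_euclideanSpace_fin]
  haveI : (μH[(m:ℝ)] : Measure (E m)).IsAddHaarMeasure := by
    rw [h1]; infer_instance
  exact ⟨_, Measure.isAddLeftInvariant_eq_smul (μH[(m:ℝ)] : Measure (E m)) volume⟩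

section Param
variable (ω : EuclideanSpace ℝ (Fin (m+1))) (hω : ‖ω‖ = 1)

-- the isometric parametrization of the hyperplane orthogonal to ω
noncomputable def perpIso (ω : EuclideanSpace ℝ (Fin (m+1))) (hω : ‖ω‖ = 1) :
    (E m) →ₗᵢ[ℝ] EuclideanSpace ℝ (Fin (m+1)) :=
  haveI : Fact (finrank ℝ (EuclideanSpace ℝ (Fin (m+1))) = m + 1) :=
    ⟨finrank_euclideanSpace_fin⟩
  ((ℝ ∙ ω)ᗮ).subtypeₗᵢ.comp
    (OrthonormalBasis.fromOrthogonalSpanSingleton m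
      (by intro h; rw [h] at hω; simp at hω)).repr.symm.toLinearIsometry

lemma perpIso_mem (y : E m) : (perpIso ω hω) y ∈ (ℝ ∙ ω)ᗮ := by
  unfold perpIso
  exact Submodule.coe_mem _

lemma perpIso_inner (y : E m) : (inner ℝ ((perpIso ω hω) y) ω : ℝ) = 0 := by
  have h := perpIso_mem ω hω y
  rw [Submodule.mem_orthogonal_singleton_iff_inner_right] at h
  rw [real_inner_comm]; exact h

lemma perpIso_surj (z : EuclideanSpace ℝ (Fin (m+1))) (hz : z ∈ (ℝ ∙ ω)ᗮ) :
    ∃ y : E m, (perpIso ω hω) y = z := by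
  haveI : Fact (finrank ℝ (EuclideanSpace ℝ (Fin (m+1))) = m + 1) :=
    ⟨finrank_euclideanSpace_fin⟩
  refine ⟨(OrthonormalBasis.fromOrthogonalSpanSingleton m
      (by intro h; rw [h] at hω; simp at hω)).repr ⟨z, hz⟩, ?_⟩
  unfold perpIso
  simp

-- hyperplane as the range of the affine parametrization
lemma hyperplane_eq_range (p : ℝ) :
    {x : EuclideanSpace ℝ (Fin (m+1)) | (inner ℝ x ω : ℝ) = p}
      = range (fun y : E m => p • ω + (perpIso ω hω) y) := by
  ext x
  simp only [mem_setOf_eq, mem_range]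
  constructor
  · intro hx
    have hz : x - p • ω ∈ (ℝ ∙ ω)ᗮ := by
      rw [Submodule.mem_orthogonal_singleton_iff_inner_right]
      rw [inner_sub_right, real_inner_smul_right, real_inner_self_eq_norm_sq, hω,
        real_inner_comm, hx]
      ring
    obtain ⟨y, hy⟩ := perpIso_surj ω hω (x - p • ω) hz
    exact ⟨y, by rw [hy]; abel⟩
  · rintro ⟨y, rfl⟩
    rw [inner_add_left, real_inner_smul_left, real_inner_self_eq_norm_sq, hω,
      perpIso_inner]
    ring

lemma isometry_param (p : ℝ) : Isometry (fun y : E m => p • ω + (perpIso ω hω) y) := by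
  intro a b
  rw [edist_dist, edist_dist]
  congr 1
  rw [dist_eq_norm, dist_eq_norm, add_sub_add_left_eq_sub, ← LinearIsometry.map_sub,
    (perpIso ω hω).norm_map]

-- the key identity: radonTransform as a parametrized integral
lemma radon_eq (c : ℝ≥0)
    (hc : (μH[(m:ℝ)] : Measure (E m)) = c • (volume : Measure (E m)))
    (f : EuclideanSpace ℝ (Fin (m+1)) → ℝ) (p : ℝ) :
    radonTransform f ω p = (c:ℝ) • ∫ y : E m, f (p • ω + (perpIso ω hω) y) := by
  have hiso := isometry_param ω hω p
  have hme : MeasurableEmbedding (fun y : E m => p • ω + (perpIso ω hω) y) :=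
    hiso.isClosedEmbedding.measurableEmbedding
  have hmap : Measure.map (fun y : E m => p • ω + (perpIso ω hω) y) (μH[(m:ℝ)])
      = (μH[(m:ℝ)]).restrict {x : EuclideanSpace ℝ (Fin (m+1)) | (inner ℝ x ω : ℝ) = p} := by
    rw [hiso.map_hausdorffMeasure (Or.inl (by positivity)), hyperplane_eq_range ω hω p]
  have hd1 : ((m+1 : ℕ) : ℝ) - 1 = (m : ℝ) := by push_cast; ring
  unfold radonTransform
  rw [hd1, ← hmap, hme.integral_map, hc, integral_smul_nnreal_measure]
  rfl

end Param

lemma exists_adapted_basis (ω : EuclideanSpace ℝ (Fin (m+1))) (hω : ‖ω‖ = 1) :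
    ∃ b : OrthonormalBasis (Fin (m+1)) ℝ (EuclideanSpace ℝ (Fin (m+1))),
      b 0 = ω ∧ ∀ j : Fin m, b j.succ = (perpIso ω hω) (EuclideanSpace.single j (1:ℝ)) := by
  set v : Fin (m+1) → EuclideanSpace ℝ (Fin (m+1)) :=
    Fin.cons ω (fun j => (perpIso ω hω) (EuclideanSpace.single j (1:ℝ))) with hv
  have hon : Orthonormal ℝ v := by
    rw [orthonormal_iff_ite]
    intro i j
    refine Fin.cases ?_ (fun i' => ?_) i
    · refine Fin.cases ?_ (fun j' => ?_) j
      · simp only [hv, Fin.cons_zero, if_pos rfl]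
        rw [real_inner_self_eq_norm_sq, hω]; norm_num
      · simp only [hv, Fin.cons_zero, Fin.cons_succ]
        rw [if_neg (Ne.symm (Fin.succ_ne_zero j')), real_inner_comm, perpIso_inner]
    · refine Fin.cases ?_ (fun j' => ?_) j
      · simp only [hv, Fin.cons_zero, Fin.cons_succ]
        rw [if_neg (Fin.succ_ne_zero i'), perpIso_inner]
      · simp only [hv, Fin.cons_succ]
        rw [LinearIsometry.inner_map_map]
        rw [EuclideanSpace.inner_single_left]
        simp [EuclideanSpace.single_apply, Fin.succ_inj, eq_comm]
  have hcard : Fintype.card (Fin (m+1)) = finrank ℝ (EuclideanSpace ℝ (Fin (m+1))) := by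
    simp [finrank_euclideanSpace_fin]
  have hsp : ⊤ ≤ Submodule.span ℝ (range v) :=
    ((hon.linearIndependent).span_eq_top_of_card_eq_finrank hcard).ge
  refine ⟨OrthonormalBasis.mk hon hsp, ?_, fun j => ?_⟩
  · simp [OrthonormalBasis.coe_mk, hv]
  · simp [OrthonormalBasis.coe_mk, hv]

lemma iteratedDeriv_two_shift (g : ℝ → ℝ) (p : ℝ) :
    iteratedDeriv 2 (fun s => g (p + s)) 0 = iteratedDeriv 2 g p := by
  have h2 : ∀ (f : ℝ → ℝ) (x : ℝ), iteratedDeriv 2 f x = deriv (deriv f) x := by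
    intro f x
    rw [show (2:ℕ) = 1 + 1 from rfl, iteratedDeriv_succ, iteratedDeriv_one]
  rw [h2, h2]
  have h1 : deriv (fun s => g (p + s)) = fun s => deriv g (p + s) :=
    funext fun s => deriv_comp_const_add g p s
  rw [h1]
  simpa using deriv_comp_const_add (deriv g) p 0


end RadonAux
/-- The Radon projection (in a fixed direction `ω`) of a solution to the free-space wave
equation satisfies the one-dimensional wave equation. -/
theorem radon_of_wave_solves_1d_wave {d : ℕ} (hd : 2 ≤ d)
    (u : ℝ × EuclideanSpace ℝ (Fin d) → ℝ) (hu : ContDiff ℝ (⊤ : ℕ∞) u)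
    (hwave : ∀ t : ℝ, ∀ x : EuclideanSpace ℝ (Fin d),
      iteratedDeriv 2 (fun s => u (s, x)) t = laplacian (fun y => u (t, y)) x)
    (R : ℝ) (hR : 0 < R)
    (hsupp : ∀ t : ℝ, ∀ x : EuclideanSpace ℝ (Fin d), R + |t| ≤ ‖x‖ → u (t, x) = 0) :
    ∀ ω ∈ sphere (0 : EuclideanSpace ℝ (Fin d)) 1, ∀ t p : ℝ,
      iteratedDeriv 2 (fun s => radonTransform (fun y => u (s, y)) ω p) t =
        iteratedDeriv 2 (fun q => radonTransform (fun y => u (t, y)) ω q) p := by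
  obtain ⟨m, rfl⟩ : ∃ m, d = m + 1 := ⟨d - 1, by omega⟩
  intro ω hωmem t p
  have hω : ‖ω‖ = 1 := by simpa using mem_sphere_zero_iff_norm.mp hωmem
  obtain ⟨c, hc⟩ := RadonAux.hausdorff_eq_smul_volume m
  set ι := RadonAux.perpIso ω hω with hιdef
  have hradon : ∀ (f : EuclideanSpace ℝ (Fin (m+1)) → ℝ) (q : ℝ),
      radonTransform f ω q = (c : ℝ) • ∫ y : EuclideanSpace ℝ (Fin m), f (q • ω + ι y) :=
    fun f q => RadonAux.radon_eq ω hω c hc f q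
  -- smoothness of ι
  have hιc : ContDiff ℝ (⊤ : ℕ∞) (fun y : EuclideanSpace ℝ (Fin m) => ι y) :=
    ι.toContinuousLinearMap.contDiff
  -- the two parametrized families
  set F : ℝ × EuclideanSpace ℝ (Fin m) → ℝ := fun z => u (z.1, p • ω + ι z.2) with hFdef
  set G : ℝ × EuclideanSpace ℝ (Fin m) → ℝ := fun z => u (t, z.1 • ω + ι z.2) with hGdef
  have hF : ContDiff ℝ (⊤ : ℕ∞) F :=
    hu.comp (contDiff_fst.prodMk (contDiff_const.add (hιc.comp contDiff_snd)))
  have hG : ContDiff ℝ (⊤ : ℕ∞) G :=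
    hu.comp (contDiff_const.prodMk
      ((contDiff_fst.smul contDiff_const).add (hιc.comp contDiff_snd)))
  -- norm bound for the parametrization
  have hnorm : ∀ (a : ℝ) (y : EuclideanSpace ℝ (Fin m)), ‖y‖ - |a| ≤ ‖a • ω + ι y‖ := by
    intro a y
    have h1 : ‖(a • ω + ι y) - a • ω‖ ≤ ‖a • ω + ι y‖ + ‖a • ω‖ := norm_sub_le _ _
    have h2 : ‖(a • ω + ι y) - a • ω‖ = ‖y‖ := by
      rw [add_sub_cancel_left, ι.norm_map]
    have h3 : ‖a • ω‖ = |a| := by rw [norm_smul, hω, Real.norm_eq_abs, mul_one]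
    linarith
  -- support properties
  have hFs : ∀ s y, (R + |p|) + |s| < ‖y‖ → F (s, y) = 0 := by
    intro s y h
    apply hsupp
    have := hnorm p y
    linarith
  have hGs : ∀ q y, (R + |t|) + |q| < ‖y‖ → G (q, y) = 0 := by
    intro q y h
    apply hsupp
    have := hnorm q y
    linarith
  have hRp : (0:ℝ) < R + |p| := by positivity
  have hRt : (0:ℝ) < R + |t| := by positivity
  -- first and second partial derivatives in the parameter
  set F1 : ℝ × EuclideanSpace ℝ (Fin m) → ℝ := fun z => fderiv ℝ F z (1, 0) with hF1def
  set F2 : ℝ × EuclideanSpace ℝ (Fin m) → ℝ := fun z => fderiv ℝ F1 z (1, 0) with hF2def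
  set G1 : ℝ × EuclideanSpace ℝ (Fin m) → ℝ := fun z => fderiv ℝ G z (1, 0) with hG1def
  set G2 : ℝ × EuclideanSpace ℝ (Fin m) → ℝ := fun z => fderiv ℝ G1 z (1, 0) with hG2def
  have hF1 : ContDiff ℝ (⊤ : ℕ∞) F1 := RadonAux.contDiff_pderiv F hF
  have hG1 : ContDiff ℝ (⊤ : ℕ∞) G1 := RadonAux.contDiff_pderiv G hG
  have hF1s : ∀ s y, (R + |p|) + |s| < ‖y‖ → F1 (s, y) = 0 :=
    RadonAux.pderiv_supp F (R + |p|) hFs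
  have hG1s : ∀ q y, (R + |t|) + |q| < ‖y‖ → G1 (q, y) = 0 :=
    RadonAux.pderiv_supp G (R + |t|) hGs
  have hG2s : ∀ q y, (R + |t|) + |q| < ‖y‖ → G2 (q, y) = 0 :=
    RadonAux.pderiv_supp G1 (R + |t|) hG1s
  -- derivatives of the integrals
  have dF : ∀ s, HasDerivAt (fun s' => ∫ y, F (s', y)) (∫ y, F1 (s, y)) s :=
    fun s => RadonAux.hasDerivAt_integral_param F hF (R + |p|) hRp hFs s
  have dF2 : HasDerivAt (fun s => ∫ y, F1 (s, y)) (∫ y, F2 (t, y)) t :=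
    RadonAux.hasDerivAt_integral_param F1 hF1 (R + |p|) hRp hF1s t
  have dG : ∀ q, HasDerivAt (fun q' => ∫ y, G (q', y)) (∫ y, G1 (q, y)) q :=
    fun q => RadonAux.hasDerivAt_integral_param G hG (R + |t|) hRt hGs q
  have dG2 : HasDerivAt (fun q => ∫ y, G1 (q, y)) (∫ y, G2 (p, y)) p :=
    RadonAux.hasDerivAt_integral_param G1 hG1 (R + |t|) hRt hG1s p
  -- rewrite both sides using the parametrization
  have hLfun : (fun s => radonTransform (fun y => u (s, y)) ω p)
      = fun s => (c : ℝ) • ∫ y, F (s, y) := funext fun s => hradon _ p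
  have hRfun : (fun q => radonTransform (fun y => u (t, y)) ω q)
      = fun q => (c : ℝ) • ∫ y, G (q, y) := funext fun q => hradon _ q
  rw [hLfun, hRfun]
  have hL : iteratedDeriv 2 (fun s => (c : ℝ) • ∫ y, F (s, y)) t
      = (c : ℝ) • ∫ y, F2 (t, y) := by
    rw [RadonAux.iteratedDeriv_two]
    have e1 : deriv (fun s => (c : ℝ) • ∫ y, F (s, y))
        = fun s => (c : ℝ) • ∫ y, F1 (s, y) :=
      funext fun s => ((dF s).const_smul (c : ℝ)).deriv
    rw [e1]
    exact (dF2.const_smul (c : ℝ)).deriv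
  have hRr : iteratedDeriv 2 (fun q => (c : ℝ) • ∫ y, G (q, y)) p
      = (c : ℝ) • ∫ y, G2 (p, y) := by
    rw [RadonAux.iteratedDeriv_two]
    have e1 : deriv (fun q => (c : ℝ) • ∫ y, G (q, y))
        = fun q => (c : ℝ) • ∫ y, G1 (q, y) :=
      funext fun q => ((dG q).const_smul (c : ℝ)).deriv
    rw [e1]
    exact (dG2.const_smul (c : ℝ)).deriv
  rw [hL, hRr]
  congr 1
  -- the core identity: ∫ F2(t,·) = ∫ G2(p,·)
  obtain ⟨b, hb0, hbs⟩ := RadonAux.exists_adapted_basis ω hω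
  set gp : EuclideanSpace ℝ (Fin m) → ℝ := fun y => u (t, p • ω + ι y) with hgpdef
  have hgp : ContDiff ℝ (⊤ : ℕ∞) gp :=
    hu.comp (contDiff_const.prodMk (contDiff_const.add hιc))
  have hgps : ∀ y, (R + |t|) + |p| < ‖y‖ → gp y = 0 := by
    intro y h
    apply hsupp
    have := hnorm p y
    linarith
  have hut : ContDiff ℝ (⊤ : ℕ∞) (fun x : EuclideanSpace ℝ (Fin (m+1)) => u (t, x)) :=
    hu.comp (contDiff_const.prodMk contDiff_id)
  -- pointwise identity
  have hptwise : ∀ y : EuclideanSpace ℝ (Fin m), F2 (t, y) = G2 (p, y)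
      + ∑ j : Fin m, iteratedDeriv 2
          (fun s : ℝ => gp (y + s • EuclideanSpace.single j (1:ℝ))) 0 := by
    intro y
    have hF2y : F2 (t, y) = iteratedDeriv 2 (fun s => F (s, y)) t := by
      rw [RadonAux.iteratedDeriv_two]
      have e1 : deriv (fun s => F (s, y)) = fun s => F1 (s, y) :=
        funext fun s => (RadonAux.hasDerivAt_slice F hF s y).deriv
      rw [e1]
      exact ((RadonAux.hasDerivAt_slice F1 hF1 t y).deriv).symm
    have hG2y : G2 (p, y) = iteratedDeriv 2 (fun q => G (q, y)) p := by
      rw [RadonAux.iteratedDeriv_two]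
      have e1 : deriv (fun q => G (q, y)) = fun q => G1 (q, y) :=
        funext fun q => (RadonAux.hasDerivAt_slice G hG q y).deriv
      rw [e1]
      exact ((RadonAux.hasDerivAt_slice G1 hG1 p y).deriv).symm
    have hwv : iteratedDeriv 2 (fun s => F (s, y)) t
        = laplacian (fun x => u (t, x)) (p • ω + ι y) := hwave t (p • ω + ι y)
    rw [hF2y, hwv, RadonAux.laplacian_eq_sum_basis _ hut b (p • ω + ι y),
      Fin.sum_univ_succ, hb0]
    congr 1
    · -- the ω-direction term equals G2 (p, y)
      have hshift : (fun s : ℝ => u (t, (p • ω + ι y) + s • ω))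
          = fun s : ℝ => G (p + s, y) := by
        funext s
        have : (p • ω + ι y) + s • ω = (p + s) • ω + ι y := by
          rw [add_smul]; abel
        rw [hGdef]; simp only; rw [this]
      rw [hshift, hG2y]
      exact RadonAux.iteratedDeriv_two_shift (fun q => G (q, y)) p
    · -- the tangential terms
      refine Finset.sum_congr rfl fun j _ => ?_
      have : (fun s : ℝ => u (t, (p • ω + ι y) + s • b j.succ))
          = fun s : ℝ => gp (y + s • EuclideanSpace.single j (1:ℝ)) := by
        funext s
        rw [hbs j, hgpdef, ← hιdef]
        simp only
        congr 1
        rw [ι.map_add, ι.map_smul]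
        abel
      rw [this]
  -- integrability of the pieces
  have hG2cont : Continuous (fun y => G2 (p, y)) :=
    (RadonAux.contDiff_pderiv G1 hG1).continuous.comp (continuous_const.prodMk continuous_id)
  have hintG2 : Integrable (fun y => G2 (p, y)) := by
    apply RadonAux.integrable_of_zero_off_ball _ hG2cont ((R + |t|) + |p|)
    intro y hy
    exact hG2s p y hy
  have hTj : ∀ j : Fin m, (fun y : EuclideanSpace ℝ (Fin m) =>
      iteratedDeriv 2 (fun s : ℝ => gp (y + s • EuclideanSpace.single j (1:ℝ))) 0)
      = fun y => fderiv ℝ (fun z => fderiv ℝ gp z (EuclideanSpace.single j (1:ℝ))) y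
          (EuclideanSpace.single j (1:ℝ)) :=
    fun j => funext fun y => RadonAux.iteratedDeriv_two_line gp hgp y _
  have hgpj : ∀ j : Fin m, ContDiff ℝ (⊤ : ℕ∞)
      (fun z => fderiv ℝ gp z (EuclideanSpace.single j (1:ℝ))) :=
    fun j => RadonAux.contDiff_dirderiv gp hgp _
  have hgpjs : ∀ j : Fin m, ∀ z, (R + |t|) + |p| < ‖z‖ →
      fderiv ℝ gp z (EuclideanSpace.single j (1:ℝ)) = 0 :=
    fun j => RadonAux.dirderiv_supp gp ((R + |t|) + |p|) hgps _
  have hintT : ∀ j : Fin m, Integrable (fun y : EuclideanSpace ℝ (Fin m) =>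
      iteratedDeriv 2 (fun s : ℝ => gp (y + s • EuclideanSpace.single j (1:ℝ))) 0) := by
    intro j
    rw [hTj j]
    apply RadonAux.integrable_of_zero_off_ball _
      (RadonAux.contDiff_dirderiv _ (hgpj j) _).continuous ((R + |t|) + |p|)
    exact RadonAux.dirderiv_supp _ ((R + |t|) + |p|) (hgpjs j) _
  have hTzero : ∀ j : Fin m, ∫ y : EuclideanSpace ℝ (Fin m),
      iteratedDeriv 2 (fun s : ℝ => gp (y + s • EuclideanSpace.single j (1:ℝ))) 0 = 0 := by
    intro j
    rw [hTj j]
    exact RadonAux.integral_dirderiv_zero _ (hgpj j) ((R + |t|) + |p|) (hgpjs j) j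
  calc ∫ y, F2 (t, y)
      = ∫ y, (G2 (p, y) + ∑ j : Fin m, iteratedDeriv 2
          (fun s : ℝ => gp (y + s • EuclideanSpace.single j (1:ℝ))) 0) := by
        exact integral_congr_ae (Filter.Eventually.of_forall hptwise)
    _ = (∫ y, G2 (p, y)) + ∫ y, ∑ j : Fin m, iteratedDeriv 2
          (fun s : ℝ => gp (y + s • EuclideanSpace.single j (1:ℝ))) 0 := by
        exact integral_add hintG2 (integrable_finset_sum _ fun j _ => hintT j)
    _ = (∫ y, G2 (p, y)) + ∑ j : Fin m, ∫ y, iteratedDeriv 2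
          (fun s : ℝ => gp (y + s • EuclideanSpace.single j (1:ℝ))) 0 := by
        rw [integral_finset_sum _ fun j _ => hintT j]
    _ = ∫ y, G2 (p, y) := by
        simp only [hTzero, Finset.sum_const_zero, add_zero]
end

section
/- (Recovery of the Radon projections from half-time wave data.) Let d ≥ 2, let f : ℝ^d → ℝ be C^∞ with compact support contained in the open unit ball B, and let u : ℝ × ℝ^d → ℝ be C^∞, satisfy the free-space wave equation ∂²u/∂t² = Δu everywhere, satisfy u(0,x) = f(x) and ∂u/∂t(0,x) = 0 for all x, and satisfy u(t,x) = 0 whenever |x| ≥ 1 + |t|. Then for every unit vector ω ∈ S: [R u(1,·)](ω,p) = ½ [Rf](ω, p−1) for all p ∈ [1,2], and [R u(1,·)](ω,p) = ½ [Rf](ω, p+1) for all p ∈ [−2,−1]; equivalently, [Rf](ω,p) = 2 [R u(1,·)](ω, p+1) for p ∈ [0,1] and [Rf](ω,p) = 2 [R u(1,·)](ω, p−1) for p ∈ [−1,0]. -/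
open MeasureTheory Metric Set

open Module

noncomputable section RadonAux

abbrev Eu (m : ℕ) : Type := EuclideanSpace ℝ (Fin m)

lemma wtop1 : ((⊤:ℕ∞) : WithTop ℕ∞) ≠ 0 := by simp
lemma wtop2 : ((⊤:ℕ∞) : WithTop ℕ∞) + 1 ≤ ((⊤:ℕ∞) : WithTop ℕ∞) := by exact_mod_cast le_top

theorem hasDerivAt_line {Z : Type*} [NormedAddCommGroup Z] [NormedSpace ℝ Z]
    {V : Z → ℝ} (z w : Z) (s₀ : ℝ) (hV : DifferentiableAt ℝ V (z + s₀ • w)) :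
    HasDerivAt (fun s : ℝ => V (z + s • w)) (fderiv ℝ V (z + s₀ • w) w) s₀ := by
  have h1 : HasDerivAt (fun s : ℝ => z + s • w) w s₀ := by
    simpa using ((hasDerivAt_id s₀).smul_const w).const_add z
  exact hV.hasFDerivAt.comp_hasDerivAt s₀ h1

theorem fderiv_apply_contDiff {Z : Type*} [NormedAddCommGroup Z] [NormedSpace ℝ Z]
    {V : Z → ℝ} (hV : ContDiff ℝ (⊤:ℕ∞) V) (v : Z) :
    ContDiff ℝ (⊤:ℕ∞) (fun z => fderiv ℝ V z v) :=
  (hV.fderiv_right wtop2).clm_apply contDiff_const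

theorem fderiv_fderiv_apply {Z : Type*} [NormedAddCommGroup Z] [NormedSpace ℝ Z]
    {V : Z → ℝ} (hV : ContDiff ℝ (⊤:ℕ∞) V) (z v w : Z) :
    fderiv ℝ (fun x => fderiv ℝ V x v) z w = fderiv ℝ (fderiv ℝ V) z w v := by
  have h1 : HasFDerivAt (fderiv ℝ V) (fderiv ℝ (fderiv ℝ V) z) z :=
    (((hV.fderiv_right wtop2).differentiable wtop1) z).hasFDerivAt
  have h2 := (ContinuousLinearMap.apply ℝ ℝ v).hasFDerivAt.comp z h1
  have h3 : (fun x => fderiv ℝ V x v)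
      = (ContinuousLinearMap.apply ℝ ℝ v) ∘ (fderiv ℝ V) := rfl
  rw [h3, h2.fderiv]
  simp

theorem fderiv_swap {Z : Type*} [NormedAddCommGroup Z] [NormedSpace ℝ Z]
    {V : Z → ℝ} (hV : ContDiff ℝ (⊤:ℕ∞) V) (z v w : Z) :
    fderiv ℝ (fderiv ℝ V) z v w = fderiv ℝ (fderiv ℝ V) z w v :=
  second_derivative_symmetric (fun y => ((hV.differentiable wtop1) y).hasFDerivAt)
    ((((hV.fderiv_right wtop2).differentiable wtop1) z).hasFDerivAt) v w

/-- second derivative along a line -/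
theorem iteratedDeriv_two_line {Z : Type*} [NormedAddCommGroup Z] [NormedSpace ℝ Z]
    {V : Z → ℝ} (hV : ContDiff ℝ (⊤:ℕ∞) V) (z w : Z) (s₀ : ℝ) :
    iteratedDeriv 2 (fun s : ℝ => V (z + s • w)) s₀
      = fderiv ℝ (fun x => fderiv ℝ V x w) (z + s₀ • w) w := by
  have hd : deriv (fun s' : ℝ => V (z + s' • w))
      = fun s : ℝ => (fun x => fderiv ℝ V x w) (z + s • w) := by
    funext s
    exact (hasDerivAt_line z w s (hV.differentiable wtop1 _)).deriv
  have h2 : iteratedDeriv 2 (fun s : ℝ => V (z + s • w)) = deriv (deriv (fun s : ℝ => V (z + s • w))) := by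
    rw [show (2:ℕ) = 1 + 1 from rfl, iteratedDeriv_succ, iteratedDeriv_one]
  rw [h2, hd]
  exact (hasDerivAt_line z w s₀ (((fderiv_apply_contDiff hV w).differentiable wtop1) _)).deriv

def snocLI (n : ℕ) : Eu n →ₗᵢ[ℝ] Eu (n+1) := by
  exact {
    toFun := fun y => WithLp.toLp 2 (Fin.snoc y 0 : Fin (n+1) → ℝ)
    map_add' := fun y z => by
      ext i
      induction i using Fin.lastCases with
      | last => simp [Fin.snoc_last]
      | cast i => simp [Fin.snoc_castSucc]
    map_smul' := fun c y => by
      ext i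
      induction i using Fin.lastCases with
      | last => simp [Fin.snoc_last]
      | cast i => simp [Fin.snoc_castSucc]
    norm_map' := fun y => by
      rw [EuclideanSpace.norm_eq, EuclideanSpace.norm_eq, Fin.sum_univ_castSucc]
      simp [Fin.snoc_castSucc, Fin.snoc_last] }


section C2
variable {m : ℕ}

/-- vanishing outside the light cone -/
def VanishOuter (V : ℝ × EuclideanSpace ℝ (Fin m) → ℝ) : Prop :=
  ∀ t x, 1 + |t| ≤ ‖x‖ → V (t, x) = 0

theorem vanishOuter_of_lt {V : ℝ × EuclideanSpace ℝ (Fin m) → ℝ} (hVc : Continuous V)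
    (h : ∀ t x, 1 + |t| < ‖x‖ → V (t, x) = 0) : VanishOuter V := by
  intro t x hx
  have hx0 : 0 < ‖x‖ := lt_of_lt_of_le (by positivity) hx
  have hseq : Filter.Tendsto (fun k : ℕ => ((1 + (k+1:ℝ)⁻¹) • x : EuclideanSpace ℝ (Fin m)))
      Filter.atTop (nhds x) := by
    have h1 : Filter.Tendsto (fun k : ℕ => (1 + (k+1:ℝ)⁻¹)) Filter.atTop (nhds 1) := by
      have h0 := tendsto_one_div_add_atTop_nhds_zero_nat (𝕜 := ℝ)
      have := (tendsto_const_nhds (x := (1:ℝ)) (f := Filter.atTop (α := ℕ))).add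
        (by simpa [one_div] using h0)
      simpa using this
    simpa using h1.smul_const x
  have hz : ∀ k : ℕ, V (t, (1 + (k+1:ℝ)⁻¹) • x) = 0 := by
    intro k
    apply h
    rw [norm_smul]
    have h1 : (1:ℝ) < 1 + (k+1:ℝ)⁻¹ := by
      have : (0:ℝ) < (k+1:ℝ)⁻¹ := by positivity
      linarith
    calc 1 + |t| ≤ ‖x‖ := hx
    _ < (1 + (k+1:ℝ)⁻¹) * ‖x‖ := by nlinarith
    _ = ‖(1 + (k+1:ℝ)⁻¹)‖ * ‖x‖ := by rw [Real.norm_eq_abs, abs_of_pos (by linarith)]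
  have hcont : Filter.Tendsto (fun k : ℕ => V (t, (1 + (k+1:ℝ)⁻¹) • x)) Filter.atTop
      (nhds (V (t,x))) :=
    (hVc.tendsto _).comp (tendsto_const_nhds.prodMk_nhds hseq)
  have hlim : Filter.Tendsto (fun _ : ℕ => (0:ℝ)) Filter.atTop (nhds (V (t,x))) := by
    simpa [hz] using hcont
  exact tendsto_nhds_unique hlim tendsto_const_nhds

theorem VanishOuter.fderiv_apply {V : ℝ × EuclideanSpace ℝ (Fin m) → ℝ}
    (hV : ContDiff ℝ (⊤:ℕ∞) V) (h : VanishOuter V) (v : ℝ × EuclideanSpace ℝ (Fin m)) :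
    VanishOuter (fun z => fderiv ℝ V z v) := by
  have hWc : Continuous (fun z => fderiv ℝ V z v) :=
    (fderiv_apply_contDiff hV v).continuous
  apply vanishOuter_of_lt hWc
  intro t x hx
  have hO : IsOpen {z : ℝ × EuclideanSpace ℝ (Fin m) | 1 + |z.1| < ‖z.2‖} := by
    apply isOpen_lt
    · exact (continuous_const.add (continuous_abs.comp continuous_fst))
    · exact continuous_norm.comp continuous_snd
  have hmem : {z : ℝ × EuclideanSpace ℝ (Fin m) | 1 + |z.1| < ‖z.2‖} ∈
      nhds ((t,x) : ℝ × EuclideanSpace ℝ (Fin m)) := hO.mem_nhds hx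
  have hEq : V =ᶠ[nhds ((t,x) : ℝ × EuclideanSpace ℝ (Fin m))] (fun _ => 0) := by
    filter_upwards [hmem] with z hz
    exact h z.1 z.2 hz.le
  rw [hEq.fderiv_eq, fderiv_fun_const]
  simp
end C2

section C3
variable {m : ℕ}

theorem fderiv_slice {W : ℝ × EuclideanSpace ℝ (Fin m) → ℝ} (hW : ContDiff ℝ (⊤:ℕ∞) W)
    (t : ℝ) (x e : EuclideanSpace ℝ (Fin m)) :
    fderiv ℝ (fun x' => W (t, x')) x e = fderiv ℝ W (t, x) (0, e) := by
  have hg : HasFDerivAt (fun x' : EuclideanSpace ℝ (Fin m) => ((t, x') : ℝ × EuclideanSpace ℝ (Fin m)))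
      ((0 : EuclideanSpace ℝ (Fin m) →L[ℝ] ℝ).prod (ContinuousLinearMap.id ℝ _)) x :=
    HasFDerivAt.prodMk (hasFDerivAt_const t x) (hasFDerivAt_id x)
  have h1 := ((hW.differentiable wtop1 (t,x)).hasFDerivAt.comp x hg).fderiv
  rw [show (fun x' => W (t, x')) = (W ∘ fun x' : EuclideanSpace ℝ (Fin m) => ((t, x'))) from rfl, h1]
  simp

theorem fderiv_zero_of_nmem_tsupport {Z : Type*} [NormedAddCommGroup Z] [NormedSpace ℝ Z]
    {k : Z → ℝ} {x : Z} (hx : x ∉ tsupport k) : fderiv ℝ k x = 0 := by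
  have h : k =ᶠ[nhds x] (fun _ => 0) := notMem_tsupport_iff_eventuallyEq.mp hx
  rw [h.fderiv_eq, fderiv_fun_const]
  rfl

/-- integral over ℝⁿ of a directional derivative of a compactly supported function vanishes -/
theorem integral_fderiv_comp_zero {k : EuclideanSpace ℝ (Fin m) → ℝ}
    (hk : ContDiff ℝ (⊤:ℕ∞) k) (hkc : HasCompactSupport k) (e : EuclideanSpace ℝ (Fin m)) :
    ∫ y : EuclideanSpace ℝ (Fin m), fderiv ℝ k y e = 0 := by
  obtain ⟨R₀, hR₀⟩ := hkc.isBounded.subset_closedBall 0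
  set R : ℝ := R₀ + ‖e‖ + 1 with hRdef
  have hkd : Continuous fun y : EuclideanSpace ℝ (Fin m) => fderiv ℝ k y e :=
    (fderiv_apply_contDiff hk e).continuous
  obtain ⟨C, hC⟩ := (isCompact_closedBall (0 : EuclideanSpace ℝ (Fin m))
    (R + ‖e‖)).exists_bound_of_continuousOn
    (f := fun y : EuclideanSpace ℝ (Fin m) => fderiv ℝ k y e) hkd.continuousOn
  set J : ℝ → ℝ := fun s => ∫ y : EuclideanSpace ℝ (Fin m), k (y + s • e) with hJdef
  have hfz : ∀ (y : EuclideanSpace ℝ (Fin m)) (s : ℝ), R₀ < ‖y + s • e‖ →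
      fderiv ℝ k (y + s • e) e = 0 := by
    intro y s hy
    have hns : (y + s • e) ∉ tsupport k := fun hmem => by
      have := hR₀ hmem
      simp only [mem_closedBall, dist_zero_right] at this
      linarith
    rw [fderiv_zero_of_nmem_tsupport hns]
    rfl
  have key : HasDerivAt J (∫ y : EuclideanSpace ℝ (Fin m), fderiv ℝ k (y + (0:ℝ) • e) e) 0 := by
    apply (hasDerivAt_integral_of_dominated_loc_of_deriv_le (hs := ball_mem_nhds _ one_pos)
      (bound := (closedBall (0 : EuclideanSpace ℝ (Fin m)) R).indicator (fun _ => |C|))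
      (F' := fun s y => fderiv ℝ k (y + s • e) e) ?_ ?_ ?_ ?_ ?_ ?_).2
    · filter_upwards with s
      exact (hk.continuous.comp (continuous_id.add continuous_const)).aestronglyMeasurable
    · have : Integrable k volume := hk.continuous.integrable_of_hasCompactSupport hkc
      simpa using this
    · exact (hkd.comp (continuous_id.add continuous_const)).aestronglyMeasurable
    · filter_upwards with y
      intro s hs
      have hs1 : |s| ≤ 1 := le_of_lt (by simpa [Real.dist_eq] using hs)
      have hse : ‖s • e‖ ≤ ‖e‖ := by
        rw [norm_smul, Real.norm_eq_abs]
        nlinarith [norm_nonneg e]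
      by_cases hy : ‖y‖ ≤ R
      · have h1 : y + s • e ∈ closedBall (0 : EuclideanSpace ℝ (Fin m)) (R + ‖e‖) := by
          simp only [mem_closedBall, dist_zero_right]
          calc ‖y + s • e‖ ≤ ‖y‖ + ‖s • e‖ := norm_add_le _ _
          _ ≤ R + ‖e‖ := by linarith
        have h2 := hC _ h1
        rw [indicator_of_mem (by simpa [mem_closedBall, dist_zero_right] using hy)]
        calc ‖fderiv ℝ k (y + s • e) e‖ ≤ C := h2
        _ ≤ |C| := le_abs_self C
      · push_neg at hy
        rw [indicator_of_notMem (by simpa [mem_closedBall, dist_zero_right] using hy.not_ge)]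
        have hz : fderiv ℝ k (y + s • e) e = 0 := by
          apply hfz
          have h3 : ‖y‖ ≤ ‖y + s • e‖ + ‖s • e‖ := by
            calc ‖y‖ = ‖(y + s • e) - s • e‖ := by rw [add_sub_cancel_right]
            _ ≤ ‖y + s • e‖ + ‖s • e‖ := norm_sub_le _ _
          simp only [hRdef] at hy
          linarith
        simp [hz]
    · exact (integrableOn_const measure_closedBall_lt_top.ne).integrable_indicator
        measurableSet_closedBall
    · filter_upwards with y
      intro s hs
      exact hasDerivAt_line (V := k) y e s (hk.differentiable wtop1 _)
  have hconst : ∀ s, J s = J 0 := by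
    intro s
    simp only [hJdef]
    rw [integral_add_right_eq_self (fun y => k y) (s • e)]
    simp [integral_add_right_eq_self]
  have h0 : HasDerivAt J 0 0 := by
    rw [show J = fun _ : ℝ => J 0 from funext hconst]
    exact hasDerivAt_const _ _
  have := key.unique h0
  simpa using this
end C3

section C4
variable {n : ℕ}

/-- Differentiation under the integral sign for wave-type integrands along affine paths. -/
theorem hasDerivAt_param (ψ : Eu n →ₗᵢ[ℝ] Eu (n+1)) (ω : Eu (n+1)) (hω : ‖ω‖ = 1)
    {W : ℝ × Eu (n+1) → ℝ} (hW : ContDiff ℝ (⊤:ℕ∞) W) (hWs : VanishOuter W)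
    (α β γ δ s₀ : ℝ) :
    HasDerivAt (fun s => ∫ y : Eu n, W (((α, ψ y + γ • ω) : ℝ × Eu (n+1)) + s • ((β, δ • ω) : ℝ × Eu (n+1))))
      (∫ y : Eu n, fderiv ℝ W (((α, ψ y + γ • ω) : ℝ × Eu (n+1)) + s₀ • ((β, δ • ω) : ℝ × Eu (n+1)))
        ((β, δ • ω) : ℝ × Eu (n+1))) s₀ := by
  set w : ℝ × Eu (n+1) := (β, δ • ω) with hw
  set z : Eu n → ℝ × Eu (n+1) := fun y => (α, ψ y + γ • ω) with hz
  have heq : ∀ (y : Eu n) (s : ℝ), z y + s • w = ((α + s * β, ψ y + (γ + s * δ) • ω) : ℝ × Eu (n+1)) := by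
    intro y s
    simp only [hz, hw, Prod.smul_mk, Prod.mk_add_mk, smul_eq_mul, smul_smul]
    rw [add_smul, add_assoc]
  set R : ℝ := 2 + |α| + |β| * (|s₀| + 1) + |γ| + |δ| * (|s₀| + 1) with hR
  have hWs' : VanishOuter (fun x => fderiv ℝ W x w) := hWs.fderiv_apply hW w
  have houter : ∀ (y : Eu n) (s : ℝ), s ∈ ball s₀ 1 → R ≤ ‖y‖ →
      1 + |α + s * β| ≤ ‖ψ y + (γ + s * δ) • ω‖ := by
    intro y s hs hy
    have hs1 : |s| ≤ |s₀| + 1 := by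
      have h1 : |s - s₀| < 1 := by simpa [Real.dist_eq] using hs
      have := abs_sub_abs_le_abs_sub s s₀
      linarith
    have h2 : ‖ψ y + (γ + s * δ) • ω‖ ≥ ‖ψ y‖ - ‖(γ + s * δ) • ω‖ := by
      have := norm_sub_le (ψ y + (γ + s * δ) • ω) ((γ + s * δ) • ω)
      simp only [add_sub_cancel_right] at this
      linarith [norm_add_le (ψ y) ((γ + s * δ) • ω)]
    have h3 : ‖ψ y‖ = ‖y‖ := ψ.norm_map y
    have h4 : ‖(γ + s * δ) • ω‖ = |γ + s * δ| := by
      rw [norm_smul, Real.norm_eq_abs, hω, mul_one]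
    have h5 : |γ + s * δ| ≤ |γ| + |δ| * (|s₀| + 1) := by
      have := abs_add_le γ (s * δ)
      rw [abs_mul] at this
      nlinarith [abs_nonneg δ, abs_nonneg s]
    have h6 : |α + s * β| ≤ |α| + |β| * (|s₀| + 1) := by
      have := abs_add_le α (s * β)
      rw [abs_mul] at this
      nlinarith [abs_nonneg β, abs_nonneg s]
    simp only [hR] at hy
    linarith
  -- continuity of the integrand family
  have hzc : Continuous (fun p : ℝ × Eu n => z p.2 + p.1 • w) := by
    apply Continuous.add
    · exact continuous_const.prodMk ((ψ.continuous.comp continuous_snd).add continuous_const)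
    · exact continuous_fst.smul continuous_const
  have hgc : Continuous (fun p : ℝ × Eu n => fderiv ℝ W (z p.2 + p.1 • w) w) :=
    (((hW.fderiv_right wtop2).continuous.comp hzc).clm_apply continuous_const)
  obtain ⟨C, hC⟩ := ((isCompact_closedBall s₀ 1).prod
    (isCompact_closedBall (0 : Eu n) R)).exists_bound_of_continuousOn hgc.continuousOn
  apply (hasDerivAt_integral_of_dominated_loc_of_deriv_le (hs := ball_mem_nhds _ one_pos)
    (bound := (closedBall (0 : Eu n) R).indicator (fun _ => |C|))
    (F' := fun s y => fderiv ℝ W (z y + s • w) w) ?_ ?_ ?_ ?_ ?_ ?_).2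
  · filter_upwards with s
    exact (hW.continuous.comp ((continuous_const.prodMk
      (ψ.continuous.add continuous_const)).add continuous_const)).aestronglyMeasurable
  · apply Continuous.integrable_of_hasCompactSupport
    · exact hW.continuous.comp ((continuous_const.prodMk
        (ψ.continuous.add continuous_const)).add continuous_const)
    · apply HasCompactSupport.intro (isCompact_closedBall (0 : Eu n) R)
      intro y hy
      simp only [mem_closedBall, dist_zero_right, not_le] at hy
      rw [heq]
      exact hWs _ _ (houter y s₀ (mem_ball_self one_pos) hy.le)
  · exact (hgc.comp (continuous_const.prodMk continuous_id)).aestronglyMeasurable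
  · filter_upwards with y
    intro s hs
    by_cases hy : ‖y‖ ≤ R
    · have h1 : ((s, y) : ℝ × Eu n) ∈ (closedBall s₀ 1) ×ˢ (closedBall (0 : Eu n) R) := by
        constructor
        · exact mem_closedBall.mpr (le_of_lt (by simpa using hs))
        · simpa [mem_closedBall, dist_zero_right] using hy
      have h2 := hC _ h1
      rw [indicator_of_mem (by simpa [mem_closedBall, dist_zero_right] using hy)]
      calc ‖fderiv ℝ W (z y + s • w) w‖ ≤ C := h2
      _ ≤ |C| := le_abs_self C
    · push_neg at hy
      rw [indicator_of_notMem (by simpa [mem_closedBall, dist_zero_right] using hy.not_ge)]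
      have hzv : fderiv ℝ W (z y + s • w) w = 0 := by
        rw [heq]
        exact hWs' _ _ (houter y s hs hy.le)
      simp [hzv]
  · exact (integrableOn_const measure_closedBall_lt_top.ne).integrable_indicator
      measurableSet_closedBall
  · filter_upwards with y
    intro s hs
    exact hasDerivAt_line (V := W) (z y) w s (hW.differentiable wtop1 _)
end C4

section C5
variable {m : ℕ}

theorem sum_clm_onb (S : Eu m →L[ℝ] Eu m →L[ℝ] ℝ) (b₁ b₂ : OrthonormalBasis (Fin m) ℝ (Eu m)) :
    ∑ i, S (b₁ i) (b₁ i) = ∑ i, S (b₂ i) (b₂ i) := by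
  have hex : ∀ i, b₁ i = ∑ j, (inner ℝ (b₂ j) (b₁ i) : ℝ) • b₂ j := by
    intro i
    simpa [b₂.repr_apply_apply] using (b₂.sum_repr (b₁ i)).symm
  have h1 : ∀ (x : Eu m) i, S x (b₁ i) = ∑ l, (inner ℝ (b₂ l) (b₁ i) : ℝ) * S x (b₂ l) := by
    intro x i
    conv_lhs => rw [hex i]
    rw [map_sum]
    apply Finset.sum_congr rfl
    intro l _
    rw [_root_.map_smul, smul_eq_mul]
  have h2 : ∀ i l, S (b₁ i) (b₂ l) = ∑ j, (inner ℝ (b₂ j) (b₁ i) : ℝ) * S (b₂ j) (b₂ l) := by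
    intro i l
    conv_lhs => rw [hex i]
    rw [map_sum, ContinuousLinearMap.sum_apply]
    apply Finset.sum_congr rfl
    intro j _
    rw [_root_.map_smul, ContinuousLinearMap.smul_apply, smul_eq_mul]
  calc ∑ i, S (b₁ i) (b₁ i)
      = ∑ i, ∑ l, ∑ j, ((inner ℝ (b₂ j) (b₁ i) : ℝ) * (inner ℝ (b₂ l) (b₁ i) : ℝ)) * S (b₂ j) (b₂ l) := by
        apply Finset.sum_congr rfl
        intro i _
        rw [h1]
        apply Finset.sum_congr rfl
        intro l _
        rw [h2, Finset.mul_sum]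
        apply Finset.sum_congr rfl
        intro j _
        ring
    _ = ∑ l, ∑ j, ((∑ i, (inner ℝ (b₂ j) (b₁ i) : ℝ) * (inner ℝ (b₂ l) (b₁ i) : ℝ))) * S (b₂ j) (b₂ l) := by
        rw [Finset.sum_comm]
        apply Finset.sum_congr rfl
        intro l _
        rw [Finset.sum_comm]
        apply Finset.sum_congr rfl
        intro j _
        rw [Finset.sum_mul]
    _ = ∑ l, ∑ j, (inner ℝ (b₂ j) (b₂ l) : ℝ) * S (b₂ j) (b₂ l) := by
        apply Finset.sum_congr rfl
        intro l _
        apply Finset.sum_congr rfl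
        intro j _
        congr 1
        have hpar := b₁.sum_inner_mul_inner (b₂ j) (b₂ l)
        rw [← hpar]
        apply Finset.sum_congr rfl
        intro i _
        rw [real_inner_comm (b₂ l) (b₁ i)]
    _ = ∑ l, S (b₂ l) (b₂ l) := by
        apply Finset.sum_congr rfl
        intro l _
        have horth : ∀ j, (inner ℝ (b₂ j) (b₂ l) : ℝ) = if j = l then 1 else 0 :=
          fun j => orthonormal_iff_ite.mp b₂.orthonormal j l
        rw [Finset.sum_congr rfl (fun j _ => by rw [horth j])]
        simp

theorem laplacian_eq_onb {v : Eu m → ℝ} (hv : ContDiff ℝ (⊤:ℕ∞) v) (x : Eu m)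
    (b : OrthonormalBasis (Fin m) ℝ (Eu m)) :
    laplacian v x = ∑ i, fderiv ℝ (fun z => fderiv ℝ v z (b i)) x (b i) := by
  have hS : ∀ (e e' : Eu m), fderiv ℝ (fun z => fderiv ℝ v z e) x e'
      = fderiv ℝ (fderiv ℝ v) x e' e := fun e e' => fderiv_fderiv_apply hv x e e'
  unfold laplacian
  calc ∑ i, iteratedDeriv 2 (fun s : ℝ => v (x + s • EuclideanSpace.single i (1:ℝ))) 0
      = ∑ i, fderiv ℝ (fderiv ℝ v) x (EuclideanSpace.single i 1) (EuclideanSpace.single i 1) := by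
        apply Finset.sum_congr rfl
        intro i _
        rw [iteratedDeriv_two_line hv x _ 0]
        rw [zero_smul, add_zero]
        exact hS _ _
    _ = ∑ i, fderiv ℝ (fderiv ℝ v) x (b i) (b i) := by
        have := sum_clm_onb (fderiv ℝ (fderiv ℝ v) x) (EuclideanSpace.basisFun (Fin m) ℝ) b
        simpa [EuclideanSpace.basisFun_apply] using this
    _ = ∑ i, fderiv ℝ (fun z => fderiv ℝ v z (b i)) x (b i) := by
        apply Finset.sum_congr rfl
        intro i _
        exact (hS _ _).symm
end C5

section C6
variable {m n : ℕ}

theorem line_time_eq (V : ℝ × Eu m → ℝ) (x : Eu m) :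
    (fun s : ℝ => V (s, x)) = fun s : ℝ => V (((0:ℝ), x) + s • ((1:ℝ), (0 : Eu m))) := by
  funext s
  congr 1
  simp [Prod.ext_iff]

theorem deriv_time {V : ℝ × Eu m → ℝ} (hV : ContDiff ℝ (⊤:ℕ∞) V) (t : ℝ) (x : Eu m) :
    deriv (fun s : ℝ => V (s, x)) t = fderiv ℝ V (t, x) (1, 0) := by
  rw [line_time_eq V x]
  rw [(hasDerivAt_line ((0:ℝ), x) ((1:ℝ), (0 : Eu m)) t (hV.differentiable wtop1 _)).deriv]
  congr 1
  simp [Prod.ext_iff]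

theorem iteratedDeriv_time {V : ℝ × Eu m → ℝ} (hV : ContDiff ℝ (⊤:ℕ∞) V) (t : ℝ) (x : Eu m) :
    iteratedDeriv 2 (fun s : ℝ => V (s, x)) t
      = fderiv ℝ (fun z => fderiv ℝ V z (1, 0)) ((t, x) : ℝ × Eu m) ((1:ℝ), (0 : Eu m)) := by
  rw [line_time_eq V x]
  rw [iteratedDeriv_two_line hV ((0:ℝ), x) ((1:ℝ), (0 : Eu m)) t]
  congr 1
  simp [Prod.ext_iff]

theorem slice_second {V : ℝ × Eu m → ℝ} (hV : ContDiff ℝ (⊤:ℕ∞) V) (t : ℝ) (x e e' : Eu m) :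
    fderiv ℝ (fun x' => fderiv ℝ (fun x'' => V (t, x'')) x' e) x e'
      = fderiv ℝ (fun z => fderiv ℝ V z (0, e)) ((t, x) : ℝ × Eu m) ((0:ℝ), e') := by
  have h1 : (fun x' => fderiv ℝ (fun x'' => V (t, x'')) x' e)
      = fun x' => (fun z => fderiv ℝ V z ((0:ℝ), e)) ((t, x') : ℝ × Eu m) := by
    funext x'
    exact fderiv_slice hV t x' e
  rw [h1]
  exact fderiv_slice (fderiv_apply_contDiff hV _) t x e'

theorem comp_affine_contDiff (ψ : Eu n →ₗᵢ[ℝ] Eu m) (c : Eu m) {v : Eu m → ℝ}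
    (hv : ContDiff ℝ (⊤:ℕ∞) v) : ContDiff ℝ (⊤:ℕ∞) (fun y => v (ψ y + c)) :=
  hv.comp ((ψ.toContinuousLinearMap.contDiff).add contDiff_const)

theorem fderiv_comp_affine (ψ : Eu n →ₗᵢ[ℝ] Eu m) (c : Eu m) {v : Eu m → ℝ}
    (hv : ContDiff ℝ (⊤:ℕ∞) v) (y e : Eu n) :
    fderiv ℝ (fun y' => v (ψ y' + c)) y e = fderiv ℝ v (ψ y + c) (ψ e) := by
  have hg : HasFDerivAt (fun y' : Eu n => ψ y' + c) (ψ.toContinuousLinearMap) y :=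
    ψ.toContinuousLinearMap.hasFDerivAt.add_const c
  have h1 := ((hv.differentiable wtop1 (ψ y + c)).hasFDerivAt.comp y hg).fderiv
  rw [show (fun y' => v (ψ y' + c)) = (v ∘ fun y' : Eu n => ψ y' + c) from rfl, h1]
  simp

theorem fderiv2_comp_affine (ψ : Eu n →ₗᵢ[ℝ] Eu m) (c : Eu m) {v : Eu m → ℝ}
    (hv : ContDiff ℝ (⊤:ℕ∞) v) (y : Eu n) (e e' : Eu n) :
    fderiv ℝ (fun y' => fderiv ℝ (fun y'' => v (ψ y'' + c)) y' e) y e'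
      = fderiv ℝ (fun x => fderiv ℝ v x (ψ e)) (ψ y + c) (ψ e') := by
  have h1 : (fun y' => fderiv ℝ (fun y'' => v (ψ y'' + c)) y' e)
      = fun y' => (fun x => fderiv ℝ v x (ψ e)) (ψ y' + c) := by
    funext y'
    exact fderiv_comp_affine ψ c hv y' e
  rw [h1]
  exact fderiv_comp_affine ψ c (fderiv_apply_contDiff hv _) y e'
end C6

section C7
variable {n : ℕ}

theorem dk_cpt {k : Eu n → ℝ} (hkc : HasCompactSupport k) (e : Eu n) :
    HasCompactSupport (fun y => fderiv ℝ k y e) := by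
  have h1 : HasCompactSupport (fderiv ℝ k) := hkc.fderiv ℝ
  have h2 := h1.comp_left (g := fun L : Eu n →L[ℝ] ℝ => L e) rfl
  exact h2

/-- The key cancellation: the integral over a hyperplane of `u_tt - ∂²_ω u` vanishes. -/
theorem keyzero (ψ : Eu n →ₗᵢ[ℝ] Eu (n+1)) (ω : Eu (n+1))
    (b : OrthonormalBasis (Fin (n+1)) ℝ (Eu (n+1)))
    (hlast : b (Fin.last n) = ω)
    (hψb : ∀ j : Fin n, ψ (EuclideanSpace.single j 1) = b (Fin.castSucc j))
    {u : ℝ × Eu (n+1) → ℝ} (hu : ContDiff ℝ (⊤:ℕ∞) u)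
    (hwave : ∀ t : ℝ, ∀ x : Eu (n+1),
      iteratedDeriv 2 (fun s => u (s, x)) t = laplacian (fun y => u (t, y)) x)
    (hsupp : VanishOuter u) (s q : ℝ) :
    ∫ y : Eu n, (fderiv ℝ (fun z => fderiv ℝ u z ((1:ℝ), (0 : Eu (n+1)))) (s, ψ y + q • ω) ((1:ℝ), (0 : Eu (n+1)))
      - fderiv ℝ (fun z => fderiv ℝ u z ((0:ℝ), ω)) (s, ψ y + q • ω) ((0:ℝ), ω)) = 0 := by
  set v : Eu (n+1) → ℝ := fun x => u (s, x) with hvdef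
  have hv : ContDiff ℝ (⊤:ℕ∞) v := hu.comp (contDiff_const.prodMk contDiff_id)
  set h : Eu n → ℝ := fun y => v (ψ y + q • ω) with hhdef
  have hh : ContDiff ℝ (⊤:ℕ∞) h := comp_affine_contDiff ψ (q • ω) hv
  have hωn : ‖ω‖ = 1 := by rw [← hlast]; exact b.orthonormal.1 _
  have hhc : HasCompactSupport h := by
    apply HasCompactSupport.intro (isCompact_closedBall (0 : Eu n) (1 + |s| + |q|))
    intro y hy
    simp only [mem_closedBall, dist_zero_right, not_le] at hy
    apply hsupp
    have h2 : ‖ψ y + q • ω‖ ≥ ‖ψ y‖ - ‖q • ω‖ := by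
      have := norm_sub_le (ψ y + q • ω) (q • ω)
      simp only [add_sub_cancel_right] at this
      linarith [norm_add_le (ψ y) (q • ω)]
    rw [ψ.norm_map] at h2
    rw [norm_smul, Real.norm_eq_abs, hωn, mul_one] at h2
    linarith
  -- pointwise identity
  have hpt : ∀ y : Eu n,
      (fderiv ℝ (fun z => fderiv ℝ u z ((1:ℝ), (0 : Eu (n+1)))) (s, ψ y + q • ω) ((1:ℝ), (0 : Eu (n+1)))
        - fderiv ℝ (fun z => fderiv ℝ u z ((0:ℝ), ω)) (s, ψ y + q • ω) ((0:ℝ), ω))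
      = ∑ j : Fin n, fderiv ℝ (fun y' => fderiv ℝ h y' (EuclideanSpace.single j 1)) y
          (EuclideanSpace.single j 1) := by
    intro y
    set x : Eu (n+1) := ψ y + q • ω with hxdef
    have h1 : fderiv ℝ (fun z => fderiv ℝ u z ((1:ℝ), (0 : Eu (n+1)))) (s, x) ((1:ℝ), (0 : Eu (n+1)))
        = ∑ i : Fin (n+1), fderiv ℝ (fun z => fderiv ℝ u z ((0:ℝ), b i)) ((s, x) : ℝ × Eu (n+1)) ((0:ℝ), b i) := by
      rw [← iteratedDeriv_time hu s x, hwave s x, laplacian_eq_onb hv x b]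
      apply Finset.sum_congr rfl
      intro i _
      exact slice_second hu s x (b i) (b i)
    rw [h1, Fin.sum_univ_castSucc, hlast]
    simp only [add_sub_cancel_right]
    apply Finset.sum_congr rfl
    intro j _
    rw [← slice_second hu s x (b (Fin.castSucc j)) (b (Fin.castSucc j)), ← hψb j]
    rw [fderiv2_comp_affine ψ (q • ω) hv y (EuclideanSpace.single j 1) (EuclideanSpace.single j 1)]
  rw [integral_congr_ae (Filter.Eventually.of_forall hpt)]
  rw [integral_finset_sum]
  · apply Finset.sum_eq_zero
    intro j _
    exact integral_fderiv_comp_zero (fderiv_apply_contDiff hh _) (dk_cpt hhc _) _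
  · intro j _
    apply Continuous.integrable_of_hasCompactSupport
    · exact (fderiv_apply_contDiff (fderiv_apply_contDiff hh _) _).continuous
    · exact dk_cpt (dk_cpt hhc _) _
end C7

section C8
variable {n : ℕ}

theorem pt_eq (ψ : Eu n →ₗᵢ[ℝ] Eu (n+1)) (ω : Eu (n+1)) (α β γ δ s : ℝ) (y : Eu n) :
    ((α, ψ y + γ • ω) : ℝ × Eu (n+1)) + s • ((β, δ • ω) : ℝ × Eu (n+1))
      = ((α + s * β, ψ y + (γ + s * δ) • ω) : ℝ × Eu (n+1)) := by
  simp only [Prod.smul_mk, Prod.mk_add_mk, smul_eq_mul, smul_smul]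
  rw [add_smul, add_assoc]

theorem bilin_expand {u : ℝ × Eu (n+1) → ℝ} (hu : ContDiff ℝ (⊤:ℕ∞) u) (ω : Eu (n+1))
    (z : ℝ × Eu (n+1)) :
    fderiv ℝ (fun z' => fderiv ℝ u z' ((1:ℝ), ω)) z ((1:ℝ), (-1:ℝ) • ω)
      = fderiv ℝ (fun z' => fderiv ℝ u z' ((1:ℝ), (0:Eu (n+1)))) z ((1:ℝ), (0:Eu (n+1)))
        - fderiv ℝ (fun z' => fderiv ℝ u z' ((0:ℝ), ω)) z ((0:ℝ), ω) := by
  have e1 : ((1:ℝ), (-1:ℝ) • ω) = ((1:ℝ), (0:Eu (n+1))) - ((0:ℝ), ω) := by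
    simp [Prod.ext_iff]
  have e2 : ((1:ℝ), ω) = ((1:ℝ), (0:Eu (n+1))) + ((0:ℝ), ω) := by
    simp [Prod.ext_iff]
  rw [fderiv_fderiv_apply hu, fderiv_fderiv_apply hu, fderiv_fderiv_apply hu, e1, e2]
  rw [map_sub, ContinuousLinearMap.sub_apply, map_add, map_add]
  rw [fderiv_swap hu z ((1:ℝ), (0:Eu (n+1))) ((0:ℝ), ω)]
  ring

theorem transport (ψ : Eu n →ₗᵢ[ℝ] Eu (n+1)) (ω : Eu (n+1))
    (b : OrthonormalBasis (Fin (n+1)) ℝ (Eu (n+1)))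
    (hlast : b (Fin.last n) = ω)
    (hψb : ∀ j : Fin n, ψ (EuclideanSpace.single j 1) = b (Fin.castSucc j))
    {u : ℝ × Eu (n+1) → ℝ} (hu : ContDiff ℝ (⊤:ℕ∞) u)
    (hwave : ∀ t : ℝ, ∀ x : Eu (n+1),
      iteratedDeriv 2 (fun s => u (s, x)) t = laplacian (fun y => u (t, y)) x)
    (hsupp : VanishOuter u) (q₀ σ : ℝ) :
    (∫ y : Eu n, fderiv ℝ u (σ, ψ y + (q₀ - σ) • ω) ((1:ℝ), ω))
      = ∫ y : Eu n, fderiv ℝ u (0, ψ y + q₀ • ω) ((1:ℝ), ω) := by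
  have hωn : ‖ω‖ = 1 := by rw [← hlast]; exact b.orthonormal.1 _
  set W₁ : ℝ × Eu (n+1) → ℝ := fun z => fderiv ℝ u z ((1:ℝ), ω) with hW₁def
  have hW₁ : ContDiff ℝ (⊤:ℕ∞) W₁ := fderiv_apply_contDiff hu _
  have hW₁s : VanishOuter W₁ := hsupp.fderiv_apply hu _
  set a : ℝ → ℝ := fun σ' => ∫ y : Eu n,
    W₁ (((0:ℝ), ψ y + q₀ • ω) + σ' • (((1:ℝ), (-1:ℝ) • ω) : ℝ × Eu (n+1))) with hadef
  have haz : ∀ σ', HasDerivAt a 0 σ' := by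
    intro σ'
    have h1 := hasDerivAt_param ψ ω hωn hW₁ hW₁s 0 1 q₀ (-1) σ'
    have h2 : (∫ y : Eu n, fderiv ℝ W₁ (((0:ℝ), ψ y + q₀ • ω) + σ' • (((1:ℝ), (-1:ℝ) • ω) : ℝ × Eu (n+1)))
        (((1:ℝ), (-1:ℝ) • ω) : ℝ × Eu (n+1))) = 0 := by
      have h3 : ∀ y : Eu n, fderiv ℝ W₁ (((0:ℝ), ψ y + q₀ • ω) + σ' • (((1:ℝ), (-1:ℝ) • ω) : ℝ × Eu (n+1)))
          (((1:ℝ), (-1:ℝ) • ω) : ℝ × Eu (n+1))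
          = fderiv ℝ (fun z => fderiv ℝ u z ((1:ℝ), (0:Eu (n+1)))) (σ', ψ y + (q₀ - σ') • ω) ((1:ℝ), (0:Eu (n+1)))
            - fderiv ℝ (fun z => fderiv ℝ u z ((0:ℝ), ω)) (σ', ψ y + (q₀ - σ') • ω) ((0:ℝ), ω) := by
        intro y
        rw [pt_eq]
        rw [show (0 + σ' * 1 : ℝ) = σ' by ring, show (q₀ + σ' * -1 : ℝ) = q₀ - σ' by ring]
        exact bilin_expand hu ω _
      rw [integral_congr_ae (Filter.Eventually.of_forall h3)]
      exact keyzero ψ ω b hlast hψb hu hwave hsupp σ' (q₀ - σ')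
    rw [← h2]
    exact h1
  have hconst := is_const_of_deriv_eq_zero (fun σ' => (haz σ').differentiableAt)
    (fun σ' => (haz σ').deriv) σ 0
  have ha1 : a σ = ∫ y : Eu n, fderiv ℝ u (σ, ψ y + (q₀ - σ) • ω) ((1:ℝ), ω) := by
    simp only [hadef]
    apply integral_congr_ae
    apply Filter.Eventually.of_forall
    intro y
    show W₁ (((0:ℝ), ψ y + q₀ • ω) + σ • (((1:ℝ), (-1:ℝ) • ω) : ℝ × Eu (n+1)))
      = fderiv ℝ u (σ, ψ y + (q₀ - σ) • ω) ((1:ℝ), ω)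
    rw [pt_eq]
    rw [show (0 + σ * 1 : ℝ) = σ by ring, show (q₀ + σ * -1 : ℝ) = q₀ - σ by ring]
  have ha0 : a 0 = ∫ y : Eu n, fderiv ℝ u (0, ψ y + q₀ • ω) ((1:ℝ), ω) := by
    simp only [hadef]
    apply integral_congr_ae
    apply Filter.Eventually.of_forall
    intro y
    show W₁ (((0:ℝ), ψ y + q₀ • ω) + (0:ℝ) • (((1:ℝ), (-1:ℝ) • ω) : ℝ × Eu (n+1)))
      = fderiv ℝ u (0, ψ y + q₀ • ω) ((1:ℝ), ω)
    rw [pt_eq]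
    rw [show (0 + 0 * 1 : ℝ) = 0 by ring, show (q₀ + 0 * -1 : ℝ) = q₀ by ring]
  rw [← ha1, ← ha0, hconst]
end C8

section C9
variable {n : ℕ}

theorem master (ψ : Eu n →ₗᵢ[ℝ] Eu (n+1)) (ω : Eu (n+1))
    (b : OrthonormalBasis (Fin (n+1)) ℝ (Eu (n+1)))
    (hlast : b (Fin.last n) = ω)
    (hψb : ∀ j : Fin n, ψ (EuclideanSpace.single j 1) = b (Fin.castSucc j))
    {u : ℝ × Eu (n+1) → ℝ} (hu : ContDiff ℝ (⊤:ℕ∞) u)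
    (hwave : ∀ t : ℝ, ∀ x : Eu (n+1),
      iteratedDeriv 2 (fun s => u (s, x)) t = laplacian (fun y => u (t, y)) x)
    (hsupp : VanishOuter u)
    {f : Eu (n+1) → ℝ} (hf : ContDiff ℝ (⊤:ℕ∞) f)
    (hf1 : ∀ x : Eu (n+1), 1 ≤ ‖x‖ → f x = 0)
    (hinit : ∀ x, u (0, x) = f x)
    (hinit' : ∀ x, deriv (fun s => u (s, x)) 0 = 0) (p : ℝ) :
    (∫ y : Eu n, u (1, ψ y + p • ω))
      = (1/2) * ((∫ y : Eu n, f (ψ y + (p+1) • ω)) + (∫ y : Eu n, f (ψ y + (p-1) • ω))) := by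
  have hωn : ‖ω‖ = 1 := by rw [← hlast]; exact b.orthonormal.1 _
  set F : ℝ → ℝ := fun q => ∫ y : Eu n, f (ψ y + q • ω) with hFdef
  set G : ℝ → ℝ := fun q => ∫ y : Eu n, fderiv ℝ f (ψ y + q • ω) ω with hGdef
  -- the time-0 slice identity
  have hA0 : ∀ x : Eu (n+1), fderiv ℝ u ((0 : ℝ), x) ((1:ℝ), ω) = fderiv ℝ f x ω := by
    intro x
    have e2 : ((1:ℝ), ω) = ((1:ℝ), (0:Eu (n+1))) + ((0:ℝ), ω) := by simp [Prod.ext_iff]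
    rw [e2, map_add]
    have h1 : fderiv ℝ u ((0:ℝ), x) ((1:ℝ), (0:Eu (n+1))) = 0 := by
      rw [← deriv_time hu 0 x]
      exact hinit' x
    have h2 : fderiv ℝ u ((0:ℝ), x) ((0:ℝ), ω) = fderiv ℝ f x ω := by
      rw [← fderiv_slice hu 0 x ω, show (fun x' => u ((0:ℝ), x')) = f from funext hinit]
    rw [h1, h2, zero_add]
  -- Wf and its properties
  set Wf : ℝ × Eu (n+1) → ℝ := fun z => f z.2 with hWfdef
  have hWf : ContDiff ℝ (⊤:ℕ∞) Wf := hf.comp contDiff_snd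
  have hWfs : VanishOuter Wf := by
    intro t x hx
    exact hf1 x (le_trans (by linarith [abs_nonneg t]) hx)
  have hWfslice : ∀ (t : ℝ) (x e : Eu (n+1)), fderiv ℝ Wf ((t, x) : ℝ × Eu (n+1)) ((0:ℝ), e)
      = fderiv ℝ f x e := by
    intro t x e
    rw [← fderiv_slice hWf t x e]
  -- F has derivative G
  have hF : ∀ q, HasDerivAt F (G q) q := by
    intro q
    have h1 := hasDerivAt_param ψ ω hωn hWf hWfs 0 0 0 1 q
    have hfun : (fun s : ℝ => ∫ y : Eu n, Wf (((0:ℝ), ψ y + (0:ℝ) • ω) + s • (((0:ℝ), (1:ℝ) • ω) : ℝ × Eu (n+1)))) = F := by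
      funext s
      apply integral_congr_ae
      apply Filter.Eventually.of_forall
      intro y
      show Wf (((0:ℝ), ψ y + (0:ℝ) • ω) + s • (((0:ℝ), (1:ℝ) • ω) : ℝ × Eu (n+1))) = f (ψ y + s • ω)
      rw [pt_eq]
      simp only [hWfdef]
      norm_num
    have hder : (∫ y : Eu n, fderiv ℝ Wf (((0:ℝ), ψ y + (0:ℝ) • ω) + q • (((0:ℝ), (1:ℝ) • ω) : ℝ × Eu (n+1)))
        (((0:ℝ), (1:ℝ) • ω) : ℝ × Eu (n+1))) = G q := by
      apply integral_congr_ae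
      apply Filter.Eventually.of_forall
      intro y
      show fderiv ℝ Wf (((0:ℝ), ψ y + (0:ℝ) • ω) + q • (((0:ℝ), (1:ℝ) • ω) : ℝ × Eu (n+1)))
        (((0:ℝ), (1:ℝ) • ω) : ℝ × Eu (n+1)) = fderiv ℝ f (ψ y + q • ω) ω
      rw [pt_eq, one_smul]
      rw [show (0 + q * 0 : ℝ) = 0 by ring, show ((0:ℝ) + q * 1) = q by ring]
      exact hWfslice 0 (ψ y + q • ω) ω
    rw [hfun, hder] at h1
    exact h1
  -- c and its derivative
  set c : ℝ → ℝ := fun s => ∫ y : Eu n,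
    u (((0:ℝ), ψ y + (p-1) • ω) + s • (((1:ℝ), (1:ℝ) • ω) : ℝ × Eu (n+1))) with hcdef
  have hc : ∀ s, HasDerivAt c (G (p-1+2*s)) s := by
    intro s
    have h1 := hasDerivAt_param ψ ω hωn hu hsupp 0 1 (p-1) 1 s
    have hder : (∫ y : Eu n, fderiv ℝ u (((0:ℝ), ψ y + (p-1) • ω) + s • (((1:ℝ), (1:ℝ) • ω) : ℝ × Eu (n+1)))
        (((1:ℝ), (1:ℝ) • ω) : ℝ × Eu (n+1))) = G (p-1+2*s) := by
      have hstep1 : (∫ y : Eu n, fderiv ℝ u (((0:ℝ), ψ y + (p-1) • ω) + s • (((1:ℝ), (1:ℝ) • ω) : ℝ × Eu (n+1)))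
          (((1:ℝ), (1:ℝ) • ω) : ℝ × Eu (n+1)))
          = ∫ y : Eu n, fderiv ℝ u (s, ψ y + ((p-1+2*s) - s) • ω) ((1:ℝ), ω) := by
        apply integral_congr_ae
        apply Filter.Eventually.of_forall
        intro y
        show fderiv ℝ u (((0:ℝ), ψ y + (p-1) • ω) + s • (((1:ℝ), (1:ℝ) • ω) : ℝ × Eu (n+1)))
          (((1:ℝ), (1:ℝ) • ω) : ℝ × Eu (n+1)) = fderiv ℝ u (s, ψ y + ((p-1+2*s) - s) • ω) ((1:ℝ), ω)
        rw [pt_eq, one_smul]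
        rw [show (0 + s * 1 : ℝ) = s by ring, show ((p-1) + s * 1 : ℝ) = (p-1+2*s) - s by ring]
      rw [hstep1, transport ψ ω b hlast hψb hu hwave hsupp (p-1+2*s) s]
      apply integral_congr_ae
      apply Filter.Eventually.of_forall
      intro y
      show fderiv ℝ u (0, ψ y + (p-1+2*s) • ω) ((1:ℝ), ω) = fderiv ℝ f (ψ y + (p-1+2*s) • ω) ω
      exact hA0 _
    rw [hder] at h1
    exact h1
  -- D := c - F/2 is constant
  have hD : ∀ s : ℝ, HasDerivAt (fun s' => c s' - (1/2) * F (p-1+2*s')) 0 s := by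
    intro s
    have hinner : HasDerivAt (fun s' : ℝ => p-1+2*s') 2 s := by
      simpa using ((hasDerivAt_id s).const_mul (2:ℝ)).const_add (p-1)
    have h2 := ((hF (p-1+2*s)).comp s hinner).const_mul (1/2 : ℝ)
    have h3 := (hc s).sub h2
    convert h3 using 1
    show (0:ℝ) = G (p-1+2*s) - 1/2 * (G (p-1+2*s) * 2)
    ring
    all_goals rfl
  have hconst := is_const_of_deriv_eq_zero (fun s => (hD s).differentiableAt)
    (fun s => (hD s).deriv) 1 0
  -- evaluate the pieces
  have hc1 : c 1 = ∫ y : Eu n, u (1, ψ y + p • ω) := by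
    simp only [hcdef]
    apply integral_congr_ae
    apply Filter.Eventually.of_forall
    intro y
    show u (((0:ℝ), ψ y + (p-1) • ω) + (1:ℝ) • (((1:ℝ), (1:ℝ) • ω) : ℝ × Eu (n+1)))
      = u (1, ψ y + p • ω)
    rw [pt_eq]
    rw [show (0 + 1 * 1 : ℝ) = 1 by ring, show ((p-1) + 1 * 1 : ℝ) = p by ring]
  have hc0 : c 0 = F (p-1) := by
    simp only [hcdef, hFdef]
    apply integral_congr_ae
    apply Filter.Eventually.of_forall
    intro y
    show u (((0:ℝ), ψ y + (p-1) • ω) + (0:ℝ) • (((1:ℝ), (1:ℝ) • ω) : ℝ × Eu (n+1)))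
      = f (ψ y + (p-1) • ω)
    rw [pt_eq]
    rw [show (0 + 0 * 1 : ℝ) = 0 by ring, show ((p-1) + 0 * 1 : ℝ) = p - 1 by ring]
    exact hinit _
  have he1 : (p-1+2*(1:ℝ)) = p + 1 := by ring
  have he0 : (p-1+2*(0:ℝ)) = p - 1 := by ring
  rw [he1, he0, hc1, hc0] at hconst
  have hFp1 : F (p+1) = ∫ y : Eu n, f (ψ y + (p+1) • ω) := rfl
  have hFm1 : F (p-1) = ∫ y : Eu n, f (ψ y + (p-1) • ω) := rfl
  rw [← hFp1, ← hFm1]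
  linarith
end C9

section C10
variable {n : ℕ}
open scoped NNReal ENNReal

theorem radon_eq (ψ : Eu n →ₗᵢ[ℝ] Eu (n+1)) (ω : Eu (n+1))
    (hrange : ∀ q : ℝ, range (fun y : Eu n => ψ y + q • ω)
      = {x : Eu (n+1) | (inner ℝ x ω : ℝ) = q})
    (κ : ℝ≥0) (hκ : (μH[(n:ℝ)] : Measure (Eu n)) = κ • (volume : Measure (Eu n)))
    (g : Eu (n+1) → ℝ) (q : ℝ) :
    radonTransform g ω q = κ.toReal * ∫ y : Eu n, g (ψ y + q • ω) := by
  unfold radonTransform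
  have hexp : ((n+1 : ℕ) : ℝ) - 1 = (n : ℝ) := by push_cast; ring
  rw [hexp]
  set Φ : Eu n → Eu (n+1) := fun y => ψ y + q • ω with hΦdef
  have hiso : Isometry Φ := by
    intro y₁ y₂
    simp only [hΦdef, edist_add_right]
    exact ψ.isometry y₁ y₂
  have hmeas : Measurable Φ := hiso.continuous.measurable
  have hrestrict : (μH[(n:ℝ)] : Measure (Eu (n+1))).restrict {x : Eu (n+1) | (inner ℝ x ω : ℝ) = q}
      = Measure.map Φ (μH[(n:ℝ)] : Measure (Eu n)) := by
    ext s hs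
    rw [Measure.map_apply hmeas hs, Measure.restrict_apply hs]
    rw [← hiso.hausdorffMeasure_image (Or.inl (by positivity : (0:ℝ) ≤ (n:ℝ))) (Φ ⁻¹' s)]
    congr 1
    rw [image_preimage_eq_inter_range, hrange q]
  rw [hrestrict, (hiso.isClosedEmbedding.measurableEmbedding).integral_map, hκ]
  rw [show (κ • (volume : Measure (Eu n))) = ((κ : ℝ≥0∞) • (volume : Measure (Eu n))) from rfl]
  rw [integral_smul_measure]
  simp [smul_eq_mul]
  exact Or.inl rfl
end C10

open scoped NNReal in
/-- Recovery of the Radon projections of the initial data from the time-1 slice of the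
wave: `[R u(1,·)](ω,p) = ½[Rf](ω,p∓1)` on `[1,2]` resp. `[−2,−1]`, equivalently
`[Rf](ω,p) = 2[R u(1,·)](ω,p±1)` on `[0,1]` resp. `[−1,0]`. -/
theorem radon_recovery_from_half_time {d : ℕ} (hd : 2 ≤ d)
    (f : EuclideanSpace ℝ (Fin d) → ℝ) (hf : ContDiff ℝ (⊤ : ℕ∞) f)
    (hfc : HasCompactSupport f)
    (hfsupp : tsupport f ⊆ ball (0 : EuclideanSpace ℝ (Fin d)) 1)
    (u : ℝ × EuclideanSpace ℝ (Fin d) → ℝ) (hu : ContDiff ℝ (⊤ : ℕ∞) u)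
    (hwave : ∀ t : ℝ, ∀ x : EuclideanSpace ℝ (Fin d),
      iteratedDeriv 2 (fun s => u (s, x)) t = laplacian (fun y => u (t, y)) x)
    (hinit : ∀ x : EuclideanSpace ℝ (Fin d), u (0, x) = f x)
    (hinit' : ∀ x : EuclideanSpace ℝ (Fin d), deriv (fun s => u (s, x)) 0 = 0)
    (hsupp : ∀ t : ℝ, ∀ x : EuclideanSpace ℝ (Fin d), 1 + |t| ≤ ‖x‖ → u (t, x) = 0) :
    ∀ ω ∈ sphere (0 : EuclideanSpace ℝ (Fin d)) 1,
      (∀ p ∈ Icc (1 : ℝ) 2,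
        radonTransform (fun y => u (1, y)) ω p = (1 / 2) * radonTransform f ω (p - 1)) ∧
      (∀ p ∈ Icc (-2 : ℝ) (-1),
        radonTransform (fun y => u (1, y)) ω p = (1 / 2) * radonTransform f ω (p + 1)) ∧
      (∀ p ∈ Icc (0 : ℝ) 1,
        radonTransform f ω p = 2 * radonTransform (fun y => u (1, y)) ω (p + 1)) ∧
      (∀ p ∈ Icc (-1 : ℝ) 0,
        radonTransform f ω p = 2 * radonTransform (fun y => u (1, y)) ω (p - 1)) := by
  obtain ⟨n, rfl⟩ : ∃ n, d = n + 1 := ⟨d - 1, by omega⟩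
  intro ω hω
  have hωn : ‖ω‖ = 1 := by simpa using mem_sphere_zero_iff_norm.mp hω
  -- an orthonormal basis whose last vector is ω
  have hcard : finrank ℝ (Eu (n+1)) = Fintype.card (Fin (n+1)) := by
    simp [finrank_euclideanSpace_fin]
  have horth : Orthonormal ℝ (({Fin.last n} : Set (Fin (n+1))).restrict
      (fun _ : Fin (n+1) => ω)) := by
    constructor
    · intro i
      exact hωn
    · intro i j hij
      exfalso
      apply hij
      obtain ⟨i, hi⟩ := i
      obtain ⟨j, hj⟩ := j
      simp only [mem_singleton_iff] at hi hj
      subst hi; subst hj; rfl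
  obtain ⟨b, hb⟩ := horth.exists_orthonormalBasis_extension_of_card_eq hcard
  have hlast : b (Fin.last n) = ω := hb _ rfl
  set ψ : Eu n →ₗᵢ[ℝ] Eu (n+1) := (b.repr.symm.toLinearIsometry).comp (snocLI n) with hψdef
  have hψapp : ∀ y : Eu n, ψ y = b.repr.symm (WithLp.toLp 2 (Fin.snoc y 0 : Fin (n+1) → ℝ)) :=
    fun y => rfl
  have hψb : ∀ j : Fin n, ψ (EuclideanSpace.single j 1) = b (Fin.castSucc j) := by
    intro j
    rw [hψapp]
    have hsnoc : WithLp.toLp 2 (Fin.snoc (EuclideanSpace.single j (1:ℝ)) 0 : Fin (n+1) → ℝ)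
        = EuclideanSpace.single (Fin.castSucc j) 1 := by
      ext i
      induction i using Fin.lastCases with
      | last => simp [EuclideanSpace.single_apply, (Fin.castSucc_lt_last j).ne']
      | cast i => simp [Fin.snoc_castSucc, EuclideanSpace.single_apply, Fin.castSucc_inj, Pi.single_apply]
    rw [hsnoc, b.repr_symm_single]
  have hψω : ∀ y : Eu n, (inner ℝ (ψ y) ω : ℝ) = 0 := by
    intro y
    rw [hψapp, ← hlast, ← b.repr_symm_single (Fin.last n), LinearIsometryEquiv.inner_map_map]
    simp [EuclideanSpace.inner_single_right, Fin.snoc_last]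
  have hrange : ∀ q : ℝ, range (fun y : Eu n => ψ y + q • ω)
      = {x : Eu (n+1) | (inner ℝ x ω : ℝ) = q} := by
    intro q
    ext x
    constructor
    · rintro ⟨y, rfl⟩
      show (inner ℝ (ψ y + q • ω) ω : ℝ) = q
      rw [inner_add_left, hψω y, real_inner_smul_left, real_inner_self_eq_norm_mul_norm,
        hωn]
      ring
    · intro hx
      have hx' : (inner ℝ x ω : ℝ) = q := hx
      refine ⟨WithLp.toLp 2 (fun j => b.repr x (Fin.castSucc j)), ?_⟩
      have hxl : b.repr x (Fin.last n) = q := by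
        have h1 := b.repr.inner_map_map x ω
        have h2 : b.repr ω = EuclideanSpace.single (Fin.last n) 1 := by
          rw [← hlast, b.repr_self]
        rw [h2, hx'] at h1
        simpa [EuclideanSpace.inner_single_right] using h1
      show ψ _ + q • ω = x
      set w : Eu (n+1) :=
        WithLp.toLp 2 (Fin.snoc ((WithLp.toLp 2 (fun j => b.repr x (Fin.castSucc j)) : Eu n)) 0 : Fin (n+1) → ℝ)
        with hwdef
      have hz : w + q • EuclideanSpace.single (Fin.last n) (1:ℝ) = b.repr x := by
        ext i
        induction i using Fin.lastCases with
        | last => simp [hwdef, Fin.snoc_last, EuclideanSpace.single_apply, hxl]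
        | cast i => simp [hwdef, Fin.snoc_castSucc, EuclideanSpace.single_apply,
            (Fin.castSucc_lt_last i).ne]
      rw [hψapp, ← hlast, ← b.repr_symm_single (Fin.last n), ← _root_.map_smul, ← map_add,
        hz, b.repr.symm_apply_apply]
  -- Hausdorff measure on the parameter space is a constant multiple of Lebesgue
  have hcast : ((n:ℝ)) = ((finrank ℝ (Eu n) : ℕ) : ℝ) := by
    rw [finrank_euclideanSpace_fin]
  haveI hHaar : (μH[(n:ℝ)] : Measure (Eu n)).IsAddHaarMeasure := by
    rw [hcast]; infer_instance
  obtain ⟨κ, hκ⟩ : ∃ κ : ℝ≥0, (μH[(n:ℝ)] : Measure (Eu n)) = κ • (volume : Measure (Eu n)) :=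
    ⟨_, Measure.isAddLeftInvariant_eq_smul _ _⟩
  -- vanishing properties
  have hVu : VanishOuter u := fun t x h => hsupp t x h
  have hf1 : ∀ x : Eu (n+1), 1 ≤ ‖x‖ → f x = 0 := by
    intro x hx
    apply image_eq_zero_of_notMem_tsupport
    intro hmem
    have := hfsupp hmem
    rw [mem_ball, dist_zero_right] at this
    linarith
  have hFzero : ∀ q : ℝ, 1 ≤ |q| → (∫ y : Eu n, f (ψ y + q • ω)) = 0 := by
    intro q hq
    have hz : ∀ y : Eu n, f (ψ y + q • ω) = 0 := by
      intro y
      apply hf1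
      have h1 : |(inner ℝ (ψ y + q • ω) ω : ℝ)| ≤ ‖ψ y + q • ω‖ := by
        have h2 := abs_real_inner_le_norm (ψ y + q • ω) ω
        rw [hωn, mul_one] at h2
        exact h2
      have h2 : (inner ℝ (ψ y + q • ω) ω : ℝ) = q := by
        rw [inner_add_left, hψω y, real_inner_smul_left, real_inner_self_eq_norm_mul_norm,
          hωn]
        ring
      rw [h2] at h1
      linarith
    rw [integral_congr_ae (Filter.Eventually.of_forall hz)]
    simp
  have hmaster : ∀ p : ℝ, (∫ y : Eu n, u (1, ψ y + p • ω))
      = (1/2) * ((∫ y : Eu n, f (ψ y + (p+1) • ω)) + (∫ y : Eu n, f (ψ y + (p-1) • ω))) :=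
    master ψ ω b hlast hψb hu hwave hVu hf hf1 hinit hinit'
  have hru : ∀ q : ℝ, radonTransform (fun y => u (1, y)) ω q
      = κ.toReal * ∫ y : Eu n, u (1, ψ y + q • ω) := fun q => radon_eq ψ ω hrange κ hκ _ q
  have hrf : ∀ q : ℝ, radonTransform f ω q = κ.toReal * ∫ y : Eu n, f (ψ y + q • ω) :=
    fun q => radon_eq ψ ω hrange κ hκ f q
  refine ⟨?_, ?_, ?_, ?_⟩
  · intro p hp
    rw [hru p, hrf (p-1), hmaster p,
      hFzero (p+1) (by rw [abs_of_nonneg (by linarith [hp.1])]; linarith [hp.1])]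
    ring
  · intro p hp
    rw [hru p, hrf (p+1), hmaster p,
      hFzero (p-1) (by rw [abs_of_nonpos (by linarith [hp.2])]; linarith [hp.2])]
    ring
  · intro p hp
    have he : (p + 1) + 1 = p + 2 := by ring
    rw [hrf p, hru (p+1), hmaster (p+1), show (p+1) - 1 = p by ring, he,
      hFzero (p+2) (by rw [abs_of_nonneg (by linarith [hp.1])]; linarith [hp.1])]
    ring
  · intro p hp
    rw [hrf p, hru (p-1), hmaster (p-1), show (p-1) + 1 = p by ring,
      show (p-1) - 1 = p - 2 by ring,
      hFzero (p-2) (by rw [abs_of_nonpos (by linarith [hp.2])]; linarith [hp.2])]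
    ring
end RadonAux
end

section
/- (Even reflection smoothness.) Let φ : ℝ → ℝ be C^∞. The function ψ : ℝ → ℝ defined by ψ(p) := φ(|p|) is C^∞ on ℝ if and only if every odd-order derivative of φ vanishes at 0, i.e. φ^{(2k+1)}(0) = 0 for all k ∈ ℕ. -/
open Set Filter Asymptotics Topology

/-- Two continuous functions agreeing on `Ioi 0` agree at `0`. -/
lemma eq_at_zero_of_eqOn_Ioi {f g : ℝ → ℝ} (hf : Continuous f) (hg : Continuous g)
    (h : EqOn f g (Ioi (0:ℝ))) : f 0 = g 0 := by
  have h1 : Tendsto f (𝓝[>] (0:ℝ)) (𝓝 (f 0)) := (hf.tendsto 0).mono_left nhdsWithin_le_nhds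
  have h2 : Tendsto f (𝓝[>] (0:ℝ)) (𝓝 (g 0)) := by
    refine ((hg.tendsto 0).mono_left nhdsWithin_le_nhds).congr' ?_
    filter_upwards [self_mem_nhdsWithin] with x hx
    exact (h hx).symm
  exact tendsto_nhds_unique h1 h2

/-- Even reflection smoothness: for a `C^∞` function `φ : ℝ → ℝ`, the function
`p ↦ φ(|p|)` is `C^∞` on `ℝ` iff all odd-order derivatives of `φ` vanish at `0`. -/
theorem even_reflection_smooth (φ : ℝ → ℝ) (hφ : ContDiff ℝ (⊤ : ℕ∞) φ) :
    ContDiff ℝ (⊤ : ℕ∞) (fun p : ℝ => φ |p|) ↔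
      ∀ k : ℕ, iteratedDeriv (2 * k + 1) φ 0 = 0 := by
  set ψ : ℝ → ℝ := fun p => φ |p| with hψdef
  have hDφ : ∀ k, ContDiff ℝ (⊤ : ℕ∞) (iteratedDeriv k φ) := by
    intro k
    induction k with
    | zero => simpa using hφ
    | succ n ih =>
      rw [iteratedDeriv_succ]
      exact (contDiff_infty_iff_deriv.mp ih).2
  have hdφ : ∀ k, Differentiable ℝ (iteratedDeriv k φ) :=
    fun k => (contDiff_infty_iff_deriv.mp (hDφ k)).1
  constructor
  · intro hψ
    have hDψ : ∀ k, ContDiff ℝ (⊤ : ℕ∞) (iteratedDeriv k ψ) := by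
      intro k
      induction k with
      | zero => simpa using hψ
      | succ n ih =>
        rw [iteratedDeriv_succ]
        exact (contDiff_infty_iff_deriv.mp ih).2
    -- iterated derivatives of φ and ψ agree on [0, ∞)
    have hEq : ∀ n, EqOn (iteratedDeriv n φ) (iteratedDeriv n ψ) (Ici (0:ℝ)) := by
      intro n
      induction n with
      | zero =>
        intro p hp
        simp only [iteratedDeriv_zero, hψdef, abs_of_nonneg (mem_Ici.mp hp)]
      | succ n ih =>
        have hIoi : EqOn (iteratedDeriv (n+1) φ) (iteratedDeriv (n+1) ψ) (Ioi (0:ℝ)) := by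
          intro x hx
          rw [iteratedDeriv_succ, iteratedDeriv_succ]
          apply Filter.EventuallyEq.deriv_eq
          filter_upwards [isOpen_Ioi.mem_nhds hx] with y hy
          exact ih (mem_Ici.mpr (le_of_lt hy))
        intro x hx
        rcases eq_or_lt_of_le (mem_Ici.mp hx) with h0 | h0
        · rw [← h0]
          exact eq_at_zero_of_eqOn_Ioi ((hDφ (n+1)).continuous) ((hDψ (n+1)).continuous) hIoi
        · exact hIoi h0
    intro k
    have hEven : ψ = fun x => ψ (-x) := by
      funext x
      simp [hψdef, abs_neg]
    have h0 : iteratedDeriv (2*k+1) ψ 0 = - iteratedDeriv (2*k+1) ψ 0 := by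
      conv_lhs => rw [hEven]
      rw [iteratedDeriv_comp_neg]
      simp [pow_succ, pow_mul]
    have hψ0 : iteratedDeriv (2*k+1) ψ 0 = 0 := by linarith
    rw [hEq (2*k+1) (le_refl (0:ℝ) : (0:ℝ) ∈ Ici 0)]
    exact hψ0
  · intro hodd
    have hodd' : ∀ n, Odd n → iteratedDeriv n φ 0 = 0 := by
      rintro n ⟨m, rfl⟩
      exact hodd m
    -- candidate iterated derivatives of ψ
    set F : ℕ → ℝ → ℝ := fun k p => (if p < 0 then (-1:ℝ)^k else 1) * iteratedDeriv k φ |p|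
      with hFdef
    have key : ∀ k x, HasDerivAt (F k) (F (k+1) x) x := by
      intro k x
      rcases lt_trichotomy x 0 with hx | hx | hx
      · -- x < 0
        have hD : HasDerivAt (fun p => iteratedDeriv k φ (-p))
            (iteratedDeriv (k+1) φ (-x) * (-1)) x := by
          have h1 : HasDerivAt (iteratedDeriv k φ) (iteratedDeriv (k+1) φ (-x)) (-x) := by
            rw [iteratedDeriv_succ]
            exact ((hdφ k) (-x)).hasDerivAt
          exact h1.comp x (hasDerivAt_neg x)
        have hD2 : HasDerivAt (fun p => (-1:ℝ)^k * iteratedDeriv k φ (-p))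
            ((-1:ℝ)^k * (iteratedDeriv (k+1) φ (-x) * (-1))) x := hD.const_mul _
        have heq : F k =ᶠ[𝓝 x] fun p => (-1:ℝ)^k * iteratedDeriv k φ (-p) := by
          filter_upwards [isOpen_Iio.mem_nhds hx] with y hy
          simp [hFdef, if_pos (mem_Iio.mp hy), abs_of_neg (mem_Iio.mp hy)]
        have : HasDerivAt (F k) ((-1:ℝ)^k * (iteratedDeriv (k+1) φ (-x) * (-1))) x :=
          hD2.congr_of_eventuallyEq heq
        convert this using 1
        simp only [hFdef, if_pos hx, abs_of_neg hx, pow_succ]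
        ring
      · -- x = 0
        subst hx
        set d : ℝ := iteratedDeriv (k+1) φ 0 with hddef
        have hF10 : F (k+1) 0 = d := by simp [hFdef, hddef]
        rw [hF10]
        have hg : HasDerivAt (iteratedDeriv k φ) d 0 := by
          rw [hddef, iteratedDeriv_succ]
          exact ((hdφ k) 0).hasDerivAt
        rw [hasDerivAt_iff_isLittleO] at hg ⊢
        have habs : Tendsto (fun p : ℝ => |p|) (𝓝 0) (𝓝 0) := by
          simpa using continuous_abs.tendsto (0:ℝ)
        have h2 := hg.comp_tendsto habs
        have hO : (fun p : ℝ => |p| - 0) =O[𝓝 (0:ℝ)] fun p => p - 0 := by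
          apply isBigO_of_le
          intro p
          simp [abs_abs]
        have h3 := h2.trans_isBigO hO
        have hnorm : ∀ p, ‖F k p - F k 0 - (p - 0) • d‖ =
            ‖iteratedDeriv k φ |p| - iteratedDeriv k φ |(0:ℝ)| - (|p| - 0) • d‖ := by
          intro p
          rcases Nat.even_or_odd k with hk | hk
          · -- k even: d = 0
            have hd0 : d = 0 := by
              apply hodd'
              rcases hk with ⟨m, rfl⟩
              exact ⟨m, by ring⟩
            have hFk : ∀ q, F k q = iteratedDeriv k φ |q| := by
              intro q
              simp [hFdef, hk.neg_one_pow, ite_self]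
            rw [hFk, hFk, hd0]
            simp
          · -- k odd: iteratedDeriv k φ 0 = 0
            have hg0 : iteratedDeriv k φ 0 = 0 := hodd' k hk
            have hFk : ∀ q, F k q = (if q < 0 then (-1:ℝ) else 1) * iteratedDeriv k φ |q| := by
              intro q
              simp [hFdef, hk.neg_one_pow]
            rw [hFk, hFk]
            simp only [abs_zero, hg0, mul_zero, sub_zero, smul_eq_mul, zero_sub, abs_neg]
            rcases lt_or_ge p 0 with hp | hp
            · rw [if_pos hp, abs_of_neg hp]
              rw [show (-1:ℝ) * iteratedDeriv k φ (-p) - p * d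
                  = -(iteratedDeriv k φ (-p) - -p * d) by ring]
              rw [norm_neg]
            · rw [if_neg (not_lt.mpr hp), abs_of_nonneg hp, one_mul]
        have hfun : (fun p => ‖F k p - F k 0 - (p - 0) • d‖) =
            fun p => ‖iteratedDeriv k φ |p| - iteratedDeriv k φ |(0:ℝ)| - (|p| - 0) • d‖ :=
          funext hnorm
        rw [← isLittleO_norm_left, hfun, isLittleO_norm_left]
        exact h3.congr_left (fun p => by simp [Function.comp])
      · -- x > 0
        have h1 : HasDerivAt (iteratedDeriv k φ) (iteratedDeriv (k+1) φ x) x := by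
          rw [iteratedDeriv_succ]
          exact ((hdφ k) x).hasDerivAt
        have heq : F k =ᶠ[𝓝 x] iteratedDeriv k φ := by
          filter_upwards [isOpen_Ioi.mem_nhds hx] with y hy
          simp [hFdef, not_lt.mpr (le_of_lt (mem_Ioi.mp hy)), abs_of_pos (mem_Ioi.mp hy)]
        have : HasDerivAt (F k) (iteratedDeriv (k+1) φ x) x := h1.congr_of_eventuallyEq heq
        convert this using 1
        simp [hFdef, not_lt.mpr (le_of_lt hx), abs_of_pos hx]
    have hiter : ∀ m, iteratedDeriv m ψ = F m := by
      intro m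
      induction m with
      | zero =>
        funext p
        simp [hFdef, hψdef, ite_self]
      | succ n ih =>
        rw [iteratedDeriv_succ, ih]
        funext p
        exact (key n p).deriv
    apply contDiff_of_differentiable_iteratedDeriv
    intro m _
    rw [hiter m]
    exact fun x => (key m x).differentiableAt
end

section
/- (Odd reflection smoothness.) Let φ : ℝ → ℝ be C^∞. Define ψ : ℝ → ℝ by ψ(p) := φ(p) for p ≥ 0 and ψ(p) := −φ(−p) for p < 0. Then ψ is C^∞ on ℝ if and only if every even-order derivative of φ vanishes at 0, i.e. φ^{(2k)}(0) = 0 for all k ∈ ℕ (in particular φ(0) = 0). -/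
open Set Filter Topology

private noncomputable def oddExt (g : ℝ → ℝ) : ℝ → ℝ :=
  fun p => if 0 ≤ p then g p else -g (-p)
private noncomputable def evenExt (g : ℝ → ℝ) : ℝ → ℝ :=
  fun p => if 0 ≤ p then g p else g (-p)

private lemma hasDerivAt_oddExt {g : ℝ → ℝ} (hg : Differentiable ℝ g) (hg0 : g 0 = 0) (x : ℝ) :
    HasDerivAt (oddExt g) (evenExt (deriv g) x) x := by
  rcases lt_trichotomy x 0 with hx | hx | hx
  · have h1 : HasDerivAt (fun p : ℝ => -g (-p)) (deriv g (-x)) x := by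
      have := (((hg (-x)).hasDerivAt).comp x (hasDerivAt_neg x)).neg
      exact this.congr_deriv (by ring)
    have h2 : oddExt g =ᶠ[𝓝 x] fun p : ℝ => -g (-p) := by
      filter_upwards [Iio_mem_nhds hx] with p hp
      have hp' : p < 0 := hp
      simp [oddExt, not_le.2 hp']
    have := h1.congr_of_eventuallyEq h2
    simpa [evenExt, not_le.2 hx] using this
  · subst hx
    have h1 : HasDerivWithinAt (oddExt g) (deriv g 0) (Ici (0:ℝ)) 0 := by
      refine ((hg 0).hasDerivAt.hasDerivWithinAt).congr (fun p hp => ?_) ?_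
      · have hp' : (0:ℝ) ≤ p := hp
        simp [oddExt, hp']
      · simp [oddExt]
    have h2 : HasDerivWithinAt (oddExt g) (deriv g 0) (Iic (0:ℝ)) 0 := by
      have h1' : HasDerivAt (fun p : ℝ => -g (-p)) (deriv g 0) 0 := by
        have := (((hg (-(0:ℝ))).hasDerivAt).comp 0 (hasDerivAt_neg (0:ℝ))).neg
        exact this.congr_deriv (by simp)
      refine h1'.hasDerivWithinAt.congr (fun p hp => ?_) ?_
      · have hp' : p ≤ 0 := hp
        rcases eq_or_lt_of_le hp' with h | h
        · subst h; simp [oddExt, hg0]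
        · simp [oddExt, not_le.2 h]
      · simp [oddExt, hg0]
    have h3 := h2.union h1
    rw [Iic_union_Ici] at h3
    have h := h3.hasDerivAt (by simp)
    simpa [evenExt] using h
  · have h2 : oddExt g =ᶠ[𝓝 x] g := by
      filter_upwards [Ioi_mem_nhds hx] with p hp
      have hp' : (0:ℝ) < p := hp
      simp [oddExt, hp'.le]
    have := (hg x).hasDerivAt.congr_of_eventuallyEq h2
    simpa [evenExt, hx.le] using this

private lemma hasDerivAt_evenExt {g : ℝ → ℝ} (hg : Differentiable ℝ g) (hg0 : deriv g 0 = 0)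
    (x : ℝ) : HasDerivAt (evenExt g) (oddExt (deriv g) x) x := by
  rcases lt_trichotomy x 0 with hx | hx | hx
  · have h1 : HasDerivAt (fun p : ℝ => g (-p)) (-deriv g (-x)) x := by
      have := ((hg (-x)).hasDerivAt).comp x (hasDerivAt_neg x)
      exact this.congr_deriv (by ring)
    have h2 : evenExt g =ᶠ[𝓝 x] fun p : ℝ => g (-p) := by
      filter_upwards [Iio_mem_nhds hx] with p hp
      have hp' : p < 0 := hp
      simp [evenExt, not_le.2 hp']
    have := h1.congr_of_eventuallyEq h2
    simpa [oddExt, not_le.2 hx] using this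
  · subst hx
    have h1 : HasDerivWithinAt (evenExt g) 0 (Ici (0:ℝ)) 0 := by
      refine (hg0 ▸ (hg 0).hasDerivAt.hasDerivWithinAt).congr (fun p hp => ?_) ?_
      · have hp' : (0:ℝ) ≤ p := hp
        simp [evenExt, hp']
      · simp [evenExt]
    have h2 : HasDerivWithinAt (evenExt g) 0 (Iic (0:ℝ)) 0 := by
      have h1' : HasDerivAt (fun p : ℝ => g (-p)) 0 0 := by
        have := ((hg (-(0:ℝ))).hasDerivAt).comp 0 (hasDerivAt_neg (0:ℝ))
        exact this.congr_deriv (by simp [hg0])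
      refine h1'.hasDerivWithinAt.congr (fun p hp => ?_) ?_
      · have hp' : p ≤ 0 := hp
        rcases eq_or_lt_of_le hp' with h | h
        · subst h; simp [evenExt]
        · simp [evenExt, not_le.2 h]
      · simp [evenExt]
    have h3 := h2.union h1
    rw [Iic_union_Ici] at h3
    have h := h3.hasDerivAt (by simp)
    simpa [oddExt, hg0] using h
  · have h2 : evenExt g =ᶠ[𝓝 x] g := by
      filter_upwards [Ioi_mem_nhds hx] with p hp
      have hp' : (0:ℝ) < p := hp
      simp [evenExt, hp'.le]
    have := (hg x).hasDerivAt.congr_of_eventuallyEq h2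
    simpa [oddExt, hx.le] using this

/-- Odd reflection smoothness: for a `C^∞` function `φ : ℝ → ℝ`, the function equal to
`φ(p)` for `p ≥ 0` and to `−φ(−p)` for `p < 0` is `C^∞` on `ℝ` iff all even-order
derivatives of `φ` vanish at `0`. -/
theorem odd_reflection_smooth (φ : ℝ → ℝ) (hφ : ContDiff ℝ (⊤ : ℕ∞) φ) :
    ContDiff ℝ (⊤ : ℕ∞) (fun p : ℝ => if 0 ≤ p then φ p else -φ (-p)) ↔
      ∀ k : ℕ, iteratedDeriv (2 * k) φ 0 = 0 := by
  set ψ : ℝ → ℝ := fun p : ℝ => if 0 ≤ p then φ p else -φ (-p) with hψdef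
  constructor
  · intro hψ k
    have hψc : Continuous ψ := hψ.continuous
    have hψ0 : ψ 0 = φ 0 := by simp [hψdef]
    have hφ0 : φ 0 = 0 := by
      have h1 : Tendsto ψ (𝓝[<] (0:ℝ)) (𝓝 (φ 0)) := by
        have := tendsto_nhdsWithin_of_tendsto_nhds (s := Iio (0:ℝ)) (hψc.tendsto 0)
        rwa [hψ0] at this
      have h2 : Tendsto ψ (𝓝[<] (0:ℝ)) (𝓝 (-φ 0)) := by
        have hcont : Tendsto (fun p : ℝ => -φ (-p)) (𝓝[<] (0:ℝ)) (𝓝 (-φ 0)) := by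
          have := tendsto_nhdsWithin_of_tendsto_nhds (s := Iio (0:ℝ))
            (((hφ.continuous.comp continuous_neg).neg).tendsto 0)
          simpa [Function.comp_def, Pi.neg_def] using this
        refine hcont.congr' ?_
        filter_upwards [self_mem_nhdsWithin] with p hp
        have hp' : p < 0 := hp
        simp [hψdef, not_le.2 hp']
      have := tendsto_nhds_unique h1 h2
      linarith
    have hodd : ψ = fun x => -ψ (-x) := by
      funext x
      rcases lt_trichotomy x 0 with hx | hx | hx
      · simp [hψdef, not_le.2 hx, neg_nonneg.2 hx.le]
      · simp [hψdef, hx, hφ0]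
      · simp [hψdef, hx.le, not_le.2 (neg_lt_zero.2 hx)]
    have hψek : iteratedDeriv (2 * k) ψ 0 = 0 := by
      have h1 : iteratedDeriv (2 * k) ψ 0 = -iteratedDeriv (2 * k) ψ 0 := by
        conv_lhs => rw [hodd]
        rw [iteratedDeriv_fun_neg, iteratedDeriv_comp_neg]
        simp [pow_mul]
      linarith
    have hagree : iteratedDeriv (2 * k) ψ 0 = iteratedDeriv (2 * k) φ 0 := by
      have hcψ : Continuous (iteratedDeriv (2 * k) ψ) := by
        rw [iteratedDeriv_eq_iterate]
        exact (hψ.iterate_deriv (2 * k)).continuous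
      have hcφ : Continuous (iteratedDeriv (2 * k) φ) := by
        rw [iteratedDeriv_eq_iterate]
        exact (hφ.iterate_deriv (2 * k)).continuous
      have h1 : Tendsto (iteratedDeriv (2 * k) ψ) (𝓝[>] (0:ℝ))
          (𝓝 (iteratedDeriv (2 * k) ψ 0)) :=
        tendsto_nhdsWithin_of_tendsto_nhds (hcψ.tendsto 0)
      have h2 : Tendsto (iteratedDeriv (2 * k) ψ) (𝓝[>] (0:ℝ))
          (𝓝 (iteratedDeriv (2 * k) φ 0)) := by
        refine (tendsto_nhdsWithin_of_tendsto_nhds (hcφ.tendsto 0)).congr' ?_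
        filter_upwards [self_mem_nhdsWithin] with p hp
        refine (Filter.EventuallyEq.iteratedDeriv_eq (2 * k) ?_).symm
        have hp' : (0:ℝ) < p := hp
        filter_upwards [Ioi_mem_nhds hp'] with q hq
        have hq' : (0:ℝ) < q := hq
        simp [hψdef, hq'.le]
      exact tendsto_nhds_unique h1 h2
    rw [← hagree, hψek]
  · intro hflat
    set G : ℕ → (ℝ → ℝ) := fun m =>
      if Even m then oddExt (iteratedDeriv m φ) else evenExt (iteratedDeriv m φ) with hG
    have hGe : ∀ m, Even m → G m = oddExt (iteratedDeriv m φ) := fun m hm => by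
      simp [hG, hm]
    have hGo : ∀ m, ¬Even m → G m = evenExt (iteratedDeriv m φ) := fun m hm => by
      simp [hG, hm]
    have hdiff : ∀ m, Differentiable ℝ (iteratedDeriv m φ) := by
      intro m
      rw [iteratedDeriv_eq_iterate]
      exact (hφ.iterate_deriv m).differentiable (by simp)
    have hkey : ∀ m x, HasDerivAt (G m) (G (m + 1) x) x := by
      intro m x
      rcases Nat.even_or_odd m with hm | hm
      · obtain ⟨k, hk⟩ := hm
        have hmeven : Even m := ⟨k, hk⟩
        have hm1 : ¬Even (m + 1) := by rintro ⟨j, hj⟩; omega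
        have h0 : iteratedDeriv m φ 0 = 0 := by
          have h := hflat k
          rwa [show 2 * k = m by omega] at h
        have h := hasDerivAt_oddExt (hdiff m) h0 x
        rw [hGe m hmeven, hGo (m + 1) hm1, iteratedDeriv_succ]
        exact h
      · obtain ⟨k, hk⟩ := hm
        have hmodd : ¬Even m := by rintro ⟨j, hj⟩; omega
        have hm1 : Even (m + 1) := ⟨k + 1, by omega⟩
        have h0 : deriv (iteratedDeriv m φ) 0 = 0 := by
          rw [← iteratedDeriv_succ]
          have h := hflat (k + 1)
          rwa [show 2 * (k + 1) = m + 1 by omega] at h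
        have h := hasDerivAt_evenExt (hdiff m) h0 x
        rw [hGo m hmodd, hGe (m + 1) hm1, iteratedDeriv_succ]
        exact h
    have hsmooth : ∀ n : ℕ, ∀ m, ContDiff ℝ (n : WithTop ℕ∞) (G m) := by
      intro n
      induction n with
      | zero =>
        intro m
        have hd : Differentiable ℝ (G m) := fun x => (hkey m x).differentiableAt
        exact contDiff_zero.2 hd.continuous
      | succ n ih =>
        intro m
        have hd : deriv (G m) = G (m + 1) := funext fun x => (hkey m x).deriv
        rw [show ((n + 1 : ℕ) : WithTop ℕ∞) = (n : WithTop ℕ∞) + 1 by push_cast; ring]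
        refine contDiff_succ_iff_deriv.2 ⟨fun x => (hkey m x).differentiableAt, ?_, ?_⟩
        · intro h
          exact absurd h (by simp)
        · rw [hd]; exact ih (m + 1)
    have hG0 : ContDiff ℝ (⊤ : ℕ∞) (G 0) := contDiff_infty.2 fun n => hsmooth n 0
    have hGψ : G 0 = ψ := by
      rw [hGe 0 Even.zero, iteratedDeriv_zero]
      rfl
    rwa [hGψ] at hG0
end
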